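/- arXiv:2509.25584 — 4 statements merged into one kernel-verified Lean document; each statement's English description precedes it below -/
import Mathlib

section
/- Let X_ℓ, X_{ℓ−1} be unit-norm random vectors in ℝ^d and Z a random variable such that h(x,y) = E[Z | X_ℓ = x, X_{ℓ−1} = y] is α-Lipschitz in its first argument and β-Lipschitz in its second argument (with respect to the Euclidean norm). If E[1 − ⟨X_ℓ, X_{ℓ−1}⟩] < ε/2, then E[(E[Z|X_ℓ] − E[Z|X_{ℓ−1}])²] < 2(α² + β²)ε. -/
open MeasureTheory ProbabilityTheory

/-- `ce X f` is the conditional expectation `E[f | X]`, i.e. the conditional expectation of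
`f` with respect to the σ-algebra generated by `X`. -/
noncomputable def ce {Ω γ F : Type*} [MeasureSpace Ω] [MeasurableSpace γ]
    [NormedAddCommGroup F] [NormedSpace ℝ F] [CompleteSpace F]
    (X : Ω → γ) (f : Ω → F) : Ω → F :=
  MeasureTheory.condExp (MeasurableSpace.comap X inferInstance) ℙ f

private lemma integrable_mul_of_memL2 {Ω : Type*} {m0 : MeasurableSpace Ω} {μ : Measure Ω}
    {f g : Ω → ℝ} (hf : MemLp f 2 μ) (hg : MemLp g 2 μ) : Integrable (f * g) μ := by
  have h : MemLp (f • g) 1 μ := MemLp.smul (φ := f) (f := g) hg hf (hpqr := ⟨by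
    rw [inv_one, ENNReal.inv_two_add_inv_two]⟩)
  rw [← memLp_one_iff_integrable]
  simpa [smul_eq_mul] using h

/-- The conditional expectation is the minimal mean squared error estimator among
`m`-measurable square-integrable functions. -/
private lemma mmse_le {Ω : Type*} {m m0 : MeasurableSpace Ω} {μ : Measure Ω}
    [IsFiniteMeasure μ] (hm : m ≤ m0) {f g : Ω → ℝ} (hf : MemLp f 2 μ)
    (he : MemLp (μ[f|m]) 2 μ) (hgm : StronglyMeasurable[m] g) (hg : MemLp g 2 μ) :
    ∫ ω, ((μ[f|m]) ω - f ω) ^ 2 ∂μ ≤ ∫ ω, (g ω - f ω) ^ 2 ∂μ := by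
  haveI : SigmaFinite (μ.trim hm) := inferInstance
  set e := μ[f|m] with he_def
  have hfi : Integrable f μ := hf.integrable one_le_two
  have hef : Integrable (e - f) μ := (he.sub hf).integrable one_le_two
  have hcrossi : Integrable ((g - e) * (e - f)) μ :=
    integrable_mul_of_memL2 (hg.sub he) (he.sub hf)
  -- the cross term vanishes
  have h2 : μ[(e - f)|m] =ᵐ[μ] 0 := by
    have h3 := condExp_sub (μ := μ) (m := m) (f := μ[f|m]) (g := f) integrable_condExp hfi
    have h4 := condExp_condExp_of_le (le_refl m) hm (f := f) (μ := μ)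
    filter_upwards [h3, h4] with ω h3 h4
    simp only [Pi.sub_apply, Pi.zero_apply] at *
    rw [h3, h4, sub_self]
  have hpull : μ[(g - e) * (e - f)|m] =ᵐ[μ] (g - e) * μ[(e - f)|m] :=
    condExp_mul_of_stronglyMeasurable_left (hgm.sub stronglyMeasurable_condExp) hcrossi hef
  have hcross : ∫ ω, (g ω - e ω) * (e ω - f ω) ∂μ = 0 := by
    have h5 : ∫ ω, ((g - e) * (e - f)) ω ∂μ = ∫ ω, (μ[(g - e) * (e - f)|m]) ω ∂μ :=
      (integral_condExp hm).symm
    have h6 : ∫ ω, (μ[(g - e) * (e - f)|m]) ω ∂μ = 0 := by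
      rw [integral_congr_ae (hpull.trans ?_), integral_zero]
      filter_upwards [h2] with ω h2
      simp [h2]
    simpa using h5.trans h6
  have hsq1 : Integrable (fun ω => (g ω - e ω) ^ 2) μ := (hg.sub he).integrable_sq
  have hsq2 : Integrable (fun ω => (e ω - f ω) ^ 2) μ := (he.sub hf).integrable_sq
  have hkey : ∫ ω, (g ω - f ω) ^ 2 ∂μ
      = ∫ ω, (g ω - e ω) ^ 2 ∂μ + ∫ ω, (e ω - f ω) ^ 2 ∂μ := by
    have hexp : (fun ω => (g ω - f ω) ^ 2)
        = fun ω => ((g ω - e ω) ^ 2 + (e ω - f ω) ^ 2)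
          + 2 * ((g ω - e ω) * (e ω - f ω)) := by
      funext ω; ring
    have ha : Integrable (fun ω => (g ω - e ω) ^ 2 + (e ω - f ω) ^ 2) μ := hsq1.add hsq2
    have hb : Integrable (fun ω => 2 * ((g ω - e ω) * (e ω - f ω))) μ := by
      simpa using hcrossi.const_mul 2
    rw [hexp, integral_add ha hb, integral_add hsq1 hsq2, integral_const_mul, hcross]
    ring
  have : 0 ≤ ∫ ω, (g ω - e ω) ^ 2 ∂μ := integral_nonneg fun ω => sq_nonneg _
  linarith

/-- Functional redundancy from geometric redundancy (Theorem 1). -/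
theorem stmt_6 {Ω : Type*} [MeasureSpace Ω] [IsProbabilityMeasure (ℙ : Measure Ω)]
    {d : ℕ} (X Y : Ω → EuclideanSpace ℝ (Fin d))
    (hXm : Measurable X) (hYm : Measurable Y)
    (hX1 : ∀ᵐ ω ∂ℙ, ‖X ω‖ = 1) (hY1 : ∀ᵐ ω ∂ℙ, ‖Y ω‖ = 1)
    (Z : Ω → ℝ) (hZ : MemLp Z 2 ℙ)
    (h : EuclideanSpace ℝ (Fin d) → EuclideanSpace ℝ (Fin d) → ℝ)
    (α β ε : ℝ) (hα : 0 < α) (hβ : 0 < β) (hε : 0 < ε)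
    (hLip1 : ∀ x x' y, |h x y - h x' y| ≤ α * ‖x - x'‖)
    (hLip2 : ∀ x y y', |h x y - h x y'| ≤ β * ‖y - y'‖)
    (hcond : (fun ω => h (X ω) (Y ω)) =ᵐ[ℙ] ce (fun ω => (X ω, Y ω)) Z)
    (hcos : ∫ ω, (1 - (inner ℝ (X ω) (Y ω) : ℝ)) ∂ℙ < ε / 2) :
    ∫ ω, (ce X Z ω - ce Y Z ω) ^ 2 ∂ℙ < 2 * (α ^ 2 + β ^ 2) * ε := by
  simp only [ce] at hcond ⊢
  set mX := MeasurableSpace.comap X inferInstance with hmX_def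
  set mY := MeasurableSpace.comap Y inferInstance with hmY_def
  set mXY := MeasurableSpace.comap (fun ω => (X ω, Y ω)) inferInstance with hmXY_def
  have hmX : mX ≤ _ := hXm.comap_le
  have hmY : mY ≤ _ := hYm.comap_le
  have hmXY : mXY ≤ _ := (hXm.prodMk hYm).comap_le
  have hXle : mX ≤ mXY := by
    rw [hmX_def, hmXY_def]
    calc MeasurableSpace.comap X inferInstance
        = MeasurableSpace.comap (fun ω => (X ω, Y ω))
            (MeasurableSpace.comap Prod.fst inferInstance) := by
          rw [MeasurableSpace.comap_comp]; rfl
      _ ≤ _ := MeasurableSpace.comap_mono measurable_fst.comap_le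
  have hYle : mY ≤ mXY := by
    rw [hmY_def, hmXY_def]
    calc MeasurableSpace.comap Y inferInstance
        = MeasurableSpace.comap (fun ω => (X ω, Y ω))
            (MeasurableSpace.comap Prod.snd inferInstance) := by
          rw [MeasurableSpace.comap_comp]; rfl
      _ ≤ _ := MeasurableSpace.comap_mono measurable_snd.comap_le
  set C := α + β + |h 0 0| with hC_def
  have habs : ∀ x y : EuclideanSpace ℝ (Fin d), ‖x‖ = 1 → ‖y‖ = 1 → |h x y| ≤ C := by
    intro x y hx hy
    have h1 := hLip1 x 0 y
    have h2 := hLip2 0 y 0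
    rw [sub_zero, hx] at h1
    rw [sub_zero, hy] at h2
    have a1 := abs_add_le (h x y - h 0 y + (h 0 y - h 0 0)) (h 0 0)
    have a2 := abs_add_le (h x y - h 0 y) (h 0 y - h 0 0)
    have e1 : h x y = h x y - h 0 y + (h 0 y - h 0 0) + h 0 0 := by ring
    rw [hC_def]
    calc |h x y| = |h x y - h 0 y + (h 0 y - h 0 0) + h 0 0| := by rw [← e1]
      _ ≤ α + β + |h 0 0| := by linarith
  set H := fun ω => h (X ω) (Y ω) with hH_def
  have hHsm : @AEStronglyMeasurable _ _ _ MeasureSpace.toMeasurableSpace _ H ℙ :=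
    ((stronglyMeasurable_condExp.mono hmXY).aestronglyMeasurable).congr hcond.symm
  have hHbd : ∀ᵐ ω ∂ℙ, |H ω| ≤ C := by
    filter_upwards [hX1, hY1] with ω h1 h2 using habs _ _ h1 h2
  have hH2 : MemLp H 2 ℙ :=
    MemLp.of_bound hHsm C (by simpa [Real.norm_eq_abs] using hHbd)
  have hHint : Integrable H ℙ := hH2.integrable one_le_two
  -- bounds on the conditional expectations
  have hcebd : ∀ (m : MeasurableSpace Ω), m ≤ (MeasureSpace.toMeasurableSpace : MeasurableSpace Ω) → ∀ᵐ ω ∂ℙ, |(ℙ[H|m]) ω| ≤ C := by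
    intro m hm
    have hub : ℙ[H|m] ≤ᵐ[ℙ] ℙ[(fun _ => C : Ω → ℝ)|m] :=
      condExp_mono hHint (integrable_const C) (hHbd.mono fun ω hb => (abs_le.mp hb).2)
    have hlb : ℙ[(fun _ => -C : Ω → ℝ)|m] ≤ᵐ[ℙ] ℙ[H|m] :=
      condExp_mono (integrable_const (-C)) hHint (hHbd.mono fun ω hb => (abs_le.mp hb).1)
    have hc1 : ℙ[(fun _ => C : Ω → ℝ)|m] = fun _ => C := condExp_const hm C
    have hc2 : ℙ[(fun _ => -C : Ω → ℝ)|m] = fun _ => -C := condExp_const hm (-C)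
    filter_upwards [hub, hlb] with ω hub hlb
    rw [abs_le]
    constructor
    · have := congrFun hc2 ω; simp only [this] at hlb; linarith
    · have := congrFun hc1 ω; simp only [this] at hub; linarith
  have hce2 : ∀ (m : MeasurableSpace Ω), m ≤ (MeasureSpace.toMeasurableSpace : MeasurableSpace Ω) → MemLp (ℙ[H|m]) 2 ℙ := fun m hm =>
    MemLp.of_bound ((stronglyMeasurable_condExp (m := m)).mono hm).aestronglyMeasurable C
      (by simpa [Real.norm_eq_abs] using hcebd m hm)
  have heX2 := hce2 mX hmX
  have heY2 := hce2 mY hmY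
  -- tower property
  have hceX : ℙ[Z|mX] =ᵐ[ℙ] ℙ[H|mX] :=
    ((condExp_congr_ae (m := mX) hcond).trans (condExp_condExp_of_le hXle hmXY)).symm
  have hceY : ℙ[Z|mY] =ᵐ[ℙ] ℙ[H|mY] :=
    ((condExp_congr_ae (m := mY) hcond).trans (condExp_condExp_of_le hYle hmXY)).symm
  -- the diagonal estimators
  have hdiagc : Continuous fun x : EuclideanSpace ℝ (Fin d) => h x x := by
    refine LipschitzWith.continuous (K := (α + β).toNNReal) ?_
    refine LipschitzWith.of_dist_le_mul fun x y => ?_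
    rw [Real.dist_eq, dist_eq_norm, Real.coe_toNNReal _ (by positivity)]
    have h1 := hLip1 x y x
    have h2 := hLip2 y x y
    have h3 := abs_sub_le (h x x) (h y x) (h y y)
    nlinarith
  have hXmX : Measurable[mX] X := Measurable.of_comap_le hmX_def.symm.le
  have hYmY : Measurable[mY] Y := Measurable.of_comap_le hmY_def.symm.le
  set gX := fun ω => h (X ω) (X ω) with hgX_def
  set gY := fun ω => h (Y ω) (Y ω) with hgY_def
  have hgXsm : StronglyMeasurable[mX] gX := (hdiagc.measurable.comp hXmX).stronglyMeasurable
  have hgYsm : StronglyMeasurable[mY] gY := (hdiagc.measurable.comp hYmY).stronglyMeasurable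
  have hgX2 : MemLp gX 2 ℙ := by
    refine MemLp.of_bound (hdiagc.measurable.comp hXm).aestronglyMeasurable C ?_
    filter_upwards [hX1] with ω h1
    simpa [Real.norm_eq_abs] using habs _ _ h1 h1
  have hgY2 : MemLp gY 2 ℙ := by
    refine MemLp.of_bound (hdiagc.measurable.comp hYm).aestronglyMeasurable C ?_
    filter_upwards [hY1] with ω h1
    simpa [Real.norm_eq_abs] using habs _ _ h1 h1
  -- integrability of the cosine distance
  have hinm : Measurable[MeasureSpace.toMeasurableSpace] fun ω => (inner ℝ (X ω) (Y ω) : ℝ) :=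
    continuous_inner.measurable.comp (hXm.prodMk hYm)
  have hI_int : Integrable (fun ω => 1 - (inner ℝ (X ω) (Y ω) : ℝ)) ℙ := by
    refine memLp_one_iff_integrable.mp ?_
    refine MemLp.of_bound ((measurable_const.sub hinm).aestronglyMeasurable) 2 ?_
    filter_upwards [hX1, hY1] with ω h1 h2
    have := abs_real_inner_le_norm (X ω) (Y ω)
    rw [h1, h2] at this
    rw [Real.norm_eq_abs]
    rw [abs_le] at this ⊢
    constructor <;> linarith [this.1, this.2]
  -- MMSE estimates
  have hmmseX : ∫ ω, ((ℙ[H|mX]) ω - H ω) ^ 2 ∂ℙ ≤ ∫ ω, (gX ω - H ω) ^ 2 ∂ℙ :=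
    mmse_le hmX hH2 heX2 hgXsm hgX2
  have hmmseY : ∫ ω, ((ℙ[H|mY]) ω - H ω) ^ 2 ∂ℙ ≤ ∫ ω, (gY ω - H ω) ^ 2 ∂ℙ :=
    mmse_le hmY hH2 heY2 hgYsm hgY2
  have hbX : ∫ ω, (gX ω - H ω) ^ 2 ∂ℙ
      ≤ ∫ ω, 2 * β ^ 2 * (1 - (inner ℝ (X ω) (Y ω) : ℝ)) ∂ℙ := by
    refine integral_mono_ae ((hgX2.sub hH2).integrable_sq) (hI_int.const_mul (2 * β ^ 2)) ?_
    filter_upwards [hX1, hY1] with ω h1 h2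
    have hl := hLip2 (X ω) (X ω) (Y ω)
    calc (gX ω - H ω) ^ 2 = |gX ω - H ω| ^ 2 := (sq_abs _).symm
      _ ≤ (β * ‖X ω - Y ω‖) ^ 2 := pow_le_pow_left₀ (abs_nonneg _) hl 2
      _ = 2 * β ^ 2 * (1 - (inner ℝ (X ω) (Y ω) : ℝ)) := by
          rw [mul_pow, norm_sub_sq_real, h1, h2]; ring
  have hbY : ∫ ω, (gY ω - H ω) ^ 2 ∂ℙ
      ≤ ∫ ω, 2 * α ^ 2 * (1 - (inner ℝ (X ω) (Y ω) : ℝ)) ∂ℙ := by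
    refine integral_mono_ae ((hgY2.sub hH2).integrable_sq) (hI_int.const_mul (2 * α ^ 2)) ?_
    filter_upwards [hX1, hY1] with ω h1 h2
    have hl := hLip1 (Y ω) (X ω) (Y ω)
    calc (gY ω - H ω) ^ 2 = |gY ω - H ω| ^ 2 := (sq_abs _).symm
      _ ≤ (α * ‖Y ω - X ω‖) ^ 2 := pow_le_pow_left₀ (abs_nonneg _) hl 2
      _ = 2 * α ^ 2 * (1 - (inner ℝ (X ω) (Y ω) : ℝ)) := by
          rw [mul_pow, norm_sub_sq_real, h1, h2, real_inner_comm]; ring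
  set I := ∫ ω, (1 - (inner ℝ (X ω) (Y ω) : ℝ)) ∂ℙ with hI_def
  have hIX : ∫ ω, 2 * β ^ 2 * (1 - (inner ℝ (X ω) (Y ω) : ℝ)) ∂ℙ = 2 * β ^ 2 * I :=
    integral_const_mul _ _
  have hIY : ∫ ω, 2 * α ^ 2 * (1 - (inner ℝ (X ω) (Y ω) : ℝ)) ∂ℙ = 2 * α ^ 2 * I :=
    integral_const_mul _ _
  -- assembling
  have h1i : Integrable (fun ω => ((ℙ[H|mX]) ω - H ω) ^ 2) ℙ := (heX2.sub hH2).integrable_sq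
  have h2i : Integrable (fun ω => ((ℙ[H|mY]) ω - H ω) ^ 2) ℙ := (heY2.sub hH2).integrable_sq
  have hfinal : ∫ ω, ((ℙ[Z|mX]) ω - (ℙ[Z|mY]) ω) ^ 2 ∂ℙ
      ≤ 2 * ∫ ω, ((ℙ[H|mX]) ω - H ω) ^ 2 ∂ℙ + 2 * ∫ ω, ((ℙ[H|mY]) ω - H ω) ^ 2 ∂ℙ := by
    have hsq : Integrable (fun ω => ((ℙ[H|mX]) ω - (ℙ[H|mY]) ω) ^ 2) ℙ :=
      (heX2.sub heY2).integrable_sq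
    calc ∫ ω, ((ℙ[Z|mX]) ω - (ℙ[Z|mY]) ω) ^ 2 ∂ℙ
        = ∫ ω, ((ℙ[H|mX]) ω - (ℙ[H|mY]) ω) ^ 2 ∂ℙ := by
          refine integral_congr_ae ?_
          filter_upwards [hceX, hceY] with ω hx hy
          rw [hx, hy]
      _ ≤ ∫ ω, (2 * ((ℙ[H|mX]) ω - H ω) ^ 2 + 2 * ((ℙ[H|mY]) ω - H ω) ^ 2) ∂ℙ := by
          refine integral_mono_ae hsq ((h1i.const_mul 2).add (h2i.const_mul 2)) ?_
          refine Filter.Eventually.of_forall fun ω => ?_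
          dsimp only
          nlinarith [sq_nonneg ((ℙ[H|mX]) ω + (ℙ[H|mY]) ω - 2 * H ω)]
      _ = 2 * ∫ ω, ((ℙ[H|mX]) ω - H ω) ^ 2 ∂ℙ + 2 * ∫ ω, ((ℙ[H|mY]) ω - H ω) ^ 2 ∂ℙ := by
          rw [integral_add (h1i.const_mul 2) (h2i.const_mul 2), integral_const_mul,
            integral_const_mul]
  have hX_est : ∫ ω, ((ℙ[H|mX]) ω - H ω) ^ 2 ∂ℙ ≤ 2 * β ^ 2 * I :=
    hmmseX.trans (hbX.trans_eq hIX)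
  have hY_est : ∫ ω, ((ℙ[H|mY]) ω - H ω) ^ 2 ∂ℙ ≤ 2 * α ^ 2 * I :=
    hmmseY.trans (hbY.trans_eq hIY)
  have hpos : (0 : ℝ) < 4 * (α ^ 2 + β ^ 2) := by positivity
  calc ∫ ω, ((ℙ[Z|mX]) ω - (ℙ[Z|mY]) ω) ^ 2 ∂ℙ
      ≤ 2 * (2 * β ^ 2 * I) + 2 * (2 * α ^ 2 * I) := by linarith
    _ = 4 * (α ^ 2 + β ^ 2) * I := by ring
    _ < 4 * (α ^ 2 + β ^ 2) * (ε / 2) := mul_lt_mul_of_pos_left hcos hpos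
    _ = 2 * (α ^ 2 + β ^ 2) * ε := by ring
end

section
/- Under the hypotheses of the functional redundancy theorem, if additionally f*_ℓ(x) = E[Z|X_ℓ = x], f*_{ℓ−1}(x) = E[Z|X_{ℓ−1} = x], and f̂_ℓ, f̂_{ℓ−1} are arbitrary estimators with errors η_ℓ = E[‖f̂_ℓ(X_ℓ) − f*_ℓ(X_ℓ)‖²] and η_{ℓ−1} = E[‖f̂_{ℓ−1}(X_{ℓ−1}) − f*_{ℓ−1}(X_{ℓ−1})‖²], then E[‖f̂_ℓ(X_ℓ) − f̂_{ℓ−1}(X_{ℓ−1})‖²] < 3η_ℓ + 3η_{ℓ−1} + 6(α² + β²)ε. -/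
open MeasureTheory ProbabilityTheory

private lemma integrable_of_bdd' {α : Type*} {m0 : MeasurableSpace α} {μ : Measure α}
    [IsFiniteMeasure μ] {f : α → ℝ} {C : ℝ} (hf : AEStronglyMeasurable f μ)
    (hb : ∀ᵐ ω ∂μ, |f ω| ≤ C) : Integrable f μ :=
  (memLp_top_of_bound hf C (by simpa [Real.norm_eq_abs] using hb)).integrable le_top

private lemma condexp_sq_le' {α : Type*} {m m0 : MeasurableSpace α} (hm : m ≤ m0) {μ : Measure α}
    [IsFiniteMeasure μ] {W g : α → ℝ} {C : ℝ} (hC : 0 ≤ C)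
    (hWm : Measurable W) (hWb : ∀ᵐ ω ∂μ, |W ω| ≤ C)
    (hgm : StronglyMeasurable[m] g) (hgb : ∀ᵐ ω ∂μ, |g ω| ≤ C) :
    ∫ ω, (W ω - (μ[W|m]) ω) ^ 2 ∂μ ≤ ∫ ω, (W ω - g ω) ^ 2 ∂μ := by
  set c : α → ℝ := μ[W|m] with hc
  have hcm : AEStronglyMeasurable c μ :=
    (stronglyMeasurable_condExp.mono hm).aestronglyMeasurable
  have hgm0 : AEStronglyMeasurable g μ := (hgm.mono hm).aestronglyMeasurable
  have hcb : ∀ᵐ ω ∂μ, |c ω| ≤ C := by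
    have h1 : ∀ᵐ ω ∂μ, |W ω| ≤ (C.toNNReal : ℝ) := by
      filter_upwards [hWb] with ω hω; rwa [Real.coe_toNNReal C hC]
    filter_upwards [ae_bdd_condExp_of_ae_bdd (μ := μ) (m := m) h1] with ω hω
    rwa [Real.coe_toNNReal C hC] at hω
  have hWint : Integrable W μ := integrable_of_bdd' hWm.aestronglyMeasurable hWb
  have hum : StronglyMeasurable[m] (fun ω => c ω - g ω) := stronglyMeasurable_condExp.sub hgm
  have hub : ∀ᵐ ω ∂μ, |c ω - g ω| ≤ 2 * C := by
    filter_upwards [hcb, hgb] with ω h1 h2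
    calc |c ω - g ω| ≤ |c ω| + |g ω| := abs_sub _ _
      _ ≤ 2 * C := by linarith
  have hum0 : AEStronglyMeasurable (fun ω => c ω - g ω) μ := hcm.sub hgm0
  have hsq1 : Integrable (fun ω => (W ω - c ω) ^ 2) μ := by
    refine integrable_of_bdd' (C := (2 * C) ^ 2) ((hWm.aestronglyMeasurable.sub hcm).pow 2) ?_
    filter_upwards [hWb, hcb] with ω h1 h2
    have h3 : |W ω - c ω| ≤ 2 * C := (abs_sub _ _).trans (by linarith)
    rw [abs_of_nonneg (sq_nonneg _)]
    nlinarith [abs_le.1 h3]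
  have hsq2 : Integrable (fun ω => (c ω - g ω) ^ 2) μ := by
    refine integrable_of_bdd' (C := (2 * C) ^ 2) (hum0.pow 2) ?_
    filter_upwards [hub] with ω h1
    rw [abs_of_nonneg (sq_nonneg _)]
    nlinarith [abs_le.1 h1]
  have h3 : Integrable (fun ω => (c ω - g ω) * W ω) μ := by
    refine integrable_of_bdd' (C := 2 * C * C) (hum0.mul hWm.aestronglyMeasurable) ?_
    filter_upwards [hub, hWb] with ω h1 h2
    calc |(c ω - g ω) * W ω| = |c ω - g ω| * |W ω| := abs_mul _ _
      _ ≤ 2 * C * C := by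
        have := abs_nonneg (c ω - g ω); have := abs_nonneg (W ω); nlinarith
  have h4 : Integrable (fun ω => (c ω - g ω) * c ω) μ := by
    refine integrable_of_bdd' (C := 2 * C * C) (hum0.mul hcm) ?_
    filter_upwards [hub, hcb] with ω h1 h2
    calc |(c ω - g ω) * c ω| = |c ω - g ω| * |c ω| := abs_mul _ _
      _ ≤ 2 * C * C := by
        have := abs_nonneg (c ω - g ω); have := abs_nonneg (c ω); nlinarith
  have hpull : μ[(fun ω => c ω - g ω) * W|m] =ᵐ[μ] (fun ω => c ω - g ω) * μ[W|m] :=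
    condExp_mul_of_stronglyMeasurable_left hum h3 hWint
  have key : ∫ ω, (c ω - g ω) * W ω ∂μ = ∫ ω, (c ω - g ω) * c ω ∂μ := by
    have e1 : ∫ ω, (c ω - g ω) * W ω ∂μ = ∫ ω, (μ[(fun ω => c ω - g ω) * W|m]) ω ∂μ :=
      (integral_condExp hm).symm
    rw [e1, integral_congr_ae hpull]
    rfl
  have hexp : (fun ω => (W ω - g ω) ^ 2) = fun ω =>
      (W ω - c ω) ^ 2 + (2 * ((c ω - g ω) * W ω) - 2 * ((c ω - g ω) * c ω))
        + (c ω - g ω) ^ 2 := funext fun ω => by ring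
  have hc3 : Integrable (fun ω => 2 * ((c ω - g ω) * W ω)) μ := h3.const_mul 2
  have hc4 : Integrable (fun ω => 2 * ((c ω - g ω) * c ω)) μ := h4.const_mul 2
  have hB : Integrable (fun ω => 2 * ((c ω - g ω) * W ω) - 2 * ((c ω - g ω) * c ω)) μ :=
    hc3.sub hc4
  have hA : Integrable (fun ω => (W ω - c ω) ^ 2
      + (2 * ((c ω - g ω) * W ω) - 2 * ((c ω - g ω) * c ω))) μ := hsq1.add hB
  rw [hexp, integral_add hA hsq2, integral_add hsq1 hB, integral_sub hc3 hc4,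
    integral_const_mul, integral_const_mul, key]
  have : 0 ≤ ∫ ω, (c ω - g ω) ^ 2 ∂μ := integral_nonneg fun ω => sq_nonneg _
  linarith

set_option maxHeartbeats 1600000

/-- Functional redundancy for finite-sample estimators (Theorem 2). `X` is `X_ℓ`, `Y` is
`X_{ℓ-1}`; `fstarX`/`fstarY` are the optimal estimators `x ↦ E[Z | X_ℓ = x]` and
`x ↦ E[Z | X_{ℓ-1} = x]` (i.e. their compositions with `X`/`Y` are versions of the
conditional expectations), and `fhatX`/`fhatY` are arbitrary finite-sample estimators. -/
theorem stmt_7 {Ω : Type*} [MeasureSpace Ω] [IsProbabilityMeasure (ℙ : Measure Ω)]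
    {d : ℕ} (X Y : Ω → EuclideanSpace ℝ (Fin d))
    (hXm : Measurable X) (hYm : Measurable Y)
    (hX1 : ∀ᵐ ω ∂ℙ, ‖X ω‖ = 1) (hY1 : ∀ᵐ ω ∂ℙ, ‖Y ω‖ = 1)
    (Z : Ω → ℝ) (hZ : MemLp Z 2 ℙ)
    (h : EuclideanSpace ℝ (Fin d) → EuclideanSpace ℝ (Fin d) → ℝ)
    (α β ε : ℝ) (hα : 0 < α) (hβ : 0 < β) (hε : 0 < ε)
    (hLip1 : ∀ x x' y, |h x y - h x' y| ≤ α * ‖x - x'‖)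
    (hLip2 : ∀ x y y', |h x y - h x y'| ≤ β * ‖y - y'‖)
    (hcond : (fun ω => h (X ω) (Y ω)) =ᵐ[ℙ] ce (fun ω => (X ω, Y ω)) Z)
    (hcos : ∫ ω, (1 - (inner ℝ (X ω) (Y ω) : ℝ)) ∂ℙ < ε / 2)
    (fstarX fstarY fhatX fhatY : EuclideanSpace ℝ (Fin d) → ℝ)
    (hfstarX : (fun ω => fstarX (X ω)) =ᵐ[ℙ] ce X Z)
    (hfstarY : (fun ω => fstarY (Y ω)) =ᵐ[ℙ] ce Y Z)
    (hfhatX : MemLp (fun ω => fhatX (X ω)) 2 ℙ)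
    (hfhatY : MemLp (fun ω => fhatY (Y ω)) 2 ℙ)
    (ηX ηY : ℝ)
    (hηX : ηX = ∫ ω, (fhatX (X ω) - fstarX (X ω)) ^ 2 ∂ℙ)
    (hηY : ηY = ∫ ω, (fhatY (Y ω) - fstarY (Y ω)) ^ 2 ∂ℙ) :
    ∫ ω, (fhatX (X ω) - fhatY (Y ω)) ^ 2 ∂ℙ
      < 3 * ηX + 3 * ηY + 6 * (α ^ 2 + β ^ 2) * ε := by
  unfold ce at hcond hfstarX hfstarY
  have hm1 := hXm.comap_le
  have hm2 := hYm.comap_le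
  have hm12 := (hXm.prodMk hYm).comap_le
  have hle1 : MeasurableSpace.comap X inferInstance
      ≤ MeasurableSpace.comap (fun ω => (X ω, Y ω)) inferInstance := by
    have e1 : MeasurableSpace.comap X
          (inferInstance : MeasurableSpace (EuclideanSpace ℝ (Fin d)))
        = MeasurableSpace.comap (fun ω => (X ω, Y ω))
            (MeasurableSpace.comap Prod.fst inferInstance) := by
      rw [MeasurableSpace.comap_comp]; rfl
    rw [e1]
    exact MeasurableSpace.comap_mono measurable_fst.comap_le
  have hle2 : MeasurableSpace.comap Y inferInstance
      ≤ MeasurableSpace.comap (fun ω => (X ω, Y ω)) inferInstance := by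
    have e1 : MeasurableSpace.comap Y
          (inferInstance : MeasurableSpace (EuclideanSpace ℝ (Fin d)))
        = MeasurableSpace.comap (fun ω => (X ω, Y ω))
            (MeasurableSpace.comap Prod.snd inferInstance) := by
      rw [MeasurableSpace.comap_comp]; rfl
    rw [e1]
    exact MeasurableSpace.comap_mono measurable_snd.comap_le
  -- continuity / measurability of h
  have hcont : Continuous (Function.uncurry h) := by
    have hl : LipschitzWith (α + β).toNNReal (Function.uncurry h) := by
      apply LipschitzWith.of_dist_le_mul
      intro p q
      have h1 := hLip1 p.1 q.1 p.2
      have h2 := hLip2 q.1 p.2 q.2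
      have e : h p.1 p.2 - h q.1 q.2
          = (h p.1 p.2 - h q.1 p.2) + (h q.1 p.2 - h q.1 q.2) := by ring
      have habs : |h p.1 p.2 - h q.1 q.2| ≤ α * ‖p.1 - q.1‖ + β * ‖p.2 - q.2‖ := by
        rw [e]
        exact (abs_add_le _ _).trans (add_le_add h1 h2)
      have d1 : ‖p.1 - q.1‖ ≤ dist p q := by
        rw [← dist_eq_norm, Prod.dist_eq]; exact le_max_left _ _
      have d2 : ‖p.2 - q.2‖ ≤ dist p q := by
        rw [← dist_eq_norm, Prod.dist_eq]; exact le_max_right _ _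
      have hcoe : ((α + β).toNNReal : ℝ) = α + β := Real.coe_toNNReal _ (by positivity)
      have hde : dist (Function.uncurry h p) (Function.uncurry h q)
          = |h p.1 p.2 - h q.1 q.2| := Real.dist_eq _ _
      rw [hde, hcoe]
      have hd0 : 0 ≤ dist p q := dist_nonneg
      nlinarith [habs]
    exact hl.continuous
  have hWm : Measurable (fun ω => h (X ω) (Y ω)) :=
    hcont.measurable.comp (hXm.prodMk hYm)
  have hφ1 : Continuous (fun x : EuclideanSpace ℝ (Fin d) => h x x) :=
    hcont.comp (continuous_id.prodMk continuous_id)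
  have hXc : Measurable[MeasurableSpace.comap X inferInstance] X :=
    Measurable.of_comap_le le_rfl
  have hYc : Measurable[MeasurableSpace.comap Y inferInstance] Y :=
    Measurable.of_comap_le le_rfl
  have hg1m : StronglyMeasurable[MeasurableSpace.comap X inferInstance]
      (fun ω => h (X ω) (X ω)) := (hφ1.measurable.comp hXc).stronglyMeasurable
  have hg2m : StronglyMeasurable[MeasurableSpace.comap Y inferInstance]
      (fun ω => h (Y ω) (Y ω)) := (hφ1.measurable.comp hYc).stronglyMeasurable
  have hg1m0 : Measurable (fun ω => h (X ω) (X ω)) := hφ1.measurable.comp hXm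
  have hg2m0 : Measurable (fun ω => h (Y ω) (Y ω)) := hφ1.measurable.comp hYm
  -- bounds
  set C : ℝ := |h 0 0| + α + β with hCdef
  have hC : 0 ≤ C := by positivity
  have hbound : ∀ x y : EuclideanSpace ℝ (Fin d), ‖x‖ = 1 → ‖y‖ = 1 → |h x y| ≤ C := by
    intro x y hx hy
    have h1 := hLip1 x 0 y
    have h2 := hLip2 0 y 0
    rw [sub_zero] at h1 h2
    rw [hx] at h1; rw [hy] at h2
    have e : h x y = (h x y - h 0 y) + (h 0 y - h 0 0) + h 0 0 := by ring
    calc |h x y| = |(h x y - h 0 y) + (h 0 y - h 0 0) + h 0 0| := by rw [← e]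
      _ ≤ |(h x y - h 0 y) + (h 0 y - h 0 0)| + |h 0 0| := abs_add_le _ _
      _ ≤ |h x y - h 0 y| + |h 0 y - h 0 0| + |h 0 0| :=
          add_le_add_left (abs_add_le _ _) _
      _ ≤ C := by rw [hCdef]; linarith
  have hWb : ∀ᵐ ω ∂ℙ, |h (X ω) (Y ω)| ≤ C := by
    filter_upwards [hX1, hY1] with ω hx hy using hbound _ _ hx hy
  have hg1b : ∀ᵐ ω ∂ℙ, |h (X ω) (X ω)| ≤ C := by
    filter_upwards [hX1] with ω hx using hbound _ _ hx hx
  have hg2b : ∀ᵐ ω ∂ℙ, |h (Y ω) (Y ω)| ≤ C := by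
    filter_upwards [hY1] with ω hy using hbound _ _ hy hy
  -- ∫ ‖X - Y‖² < ε
  have hnXY : Measurable (fun ω => ‖X ω - Y ω‖ ^ 2) := ((hXm.sub hYm).norm.pow_const 2)
  have hXYb : ∀ᵐ ω ∂ℙ, |‖X ω - Y ω‖ ^ 2| ≤ 4 := by
    filter_upwards [hX1, hY1] with ω hx hy
    have : ‖X ω - Y ω‖ ≤ 2 := by
      calc ‖X ω - Y ω‖ ≤ ‖X ω‖ + ‖Y ω‖ := norm_sub_le _ _
        _ = 2 := by rw [hx, hy]; norm_num
    rw [abs_of_nonneg (sq_nonneg _)]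
    nlinarith [norm_nonneg (X ω - Y ω)]
  have hXYint : Integrable (fun ω => ‖X ω - Y ω‖ ^ 2) ℙ :=
    integrable_of_bdd' hnXY.aestronglyMeasurable hXYb
  have hXYlt : ∫ ω, ‖X ω - Y ω‖ ^ 2 ∂ℙ < ε := by
    have hEq : (fun ω => ‖X ω - Y ω‖ ^ 2)
        =ᵐ[ℙ] fun ω => 2 * (1 - (inner ℝ (X ω) (Y ω) : ℝ)) := by
      filter_upwards [hX1, hY1] with ω hx hy
      rw [norm_sub_sq_real, hx, hy]; ring
    rw [integral_congr_ae hEq, integral_const_mul]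
    linarith
  -- conditional expectations of W
  set W : Ω → ℝ := fun ω => h (X ω) (Y ω) with hWdef
  have hc1 : (ℙ[Z|MeasurableSpace.comap X inferInstance]) =ᵐ[ℙ] ℙ[W|MeasurableSpace.comap X inferInstance] :=
    (condExp_condExp_of_le hle1 hm12).symm.trans (condExp_congr_ae hcond.symm)
  have hc2 : (ℙ[Z|MeasurableSpace.comap Y inferInstance]) =ᵐ[ℙ] ℙ[W|MeasurableSpace.comap Y inferInstance] :=
    (condExp_condExp_of_le hle2 hm12).symm.trans (condExp_congr_ae hcond.symm)
  -- projection inequalities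
  have p1 : ∫ ω, (W ω - (ℙ[W|MeasurableSpace.comap X inferInstance]) ω) ^ 2 ∂ℙ ≤ ∫ ω, (W ω - h (X ω) (X ω)) ^ 2 ∂ℙ :=
    condexp_sq_le' hm1 hC hWm hWb hg1m hg1b
  have p2 : ∫ ω, (W ω - (ℙ[W|MeasurableSpace.comap Y inferInstance]) ω) ^ 2 ∂ℙ ≤ ∫ ω, (W ω - h (Y ω) (Y ω)) ^ 2 ∂ℙ :=
    condexp_sq_le' hm2 hC hWm hWb hg2m hg2b
  -- Lipschitz bounds on the residuals
  have hdiffint1 : Integrable (fun ω => (W ω - h (X ω) (X ω)) ^ 2) ℙ := by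
    refine integrable_of_bdd' (C := (2 * C) ^ 2)
      ((hWm.sub hg1m0).pow_const 2).aestronglyMeasurable ?_
    filter_upwards [hWb, hg1b] with ω h1 h2
    rw [abs_of_nonneg (sq_nonneg _)]
    have : |W ω - h (X ω) (X ω)| ≤ 2 * C := (abs_sub _ _).trans (by linarith)
    nlinarith [abs_le.1 this]
  have hdiffint2 : Integrable (fun ω => (W ω - h (Y ω) (Y ω)) ^ 2) ℙ := by
    refine integrable_of_bdd' (C := (2 * C) ^ 2)
      ((hWm.sub hg2m0).pow_const 2).aestronglyMeasurable ?_
    filter_upwards [hWb, hg2b] with ω h1 h2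
    rw [abs_of_nonneg (sq_nonneg _)]
    have : |W ω - h (Y ω) (Y ω)| ≤ 2 * C := (abs_sub _ _).trans (by linarith)
    nlinarith [abs_le.1 this]
  have q1 : ∫ ω, (W ω - h (X ω) (X ω)) ^ 2 ∂ℙ ≤ β ^ 2 * ∫ ω, ‖X ω - Y ω‖ ^ 2 ∂ℙ := by
    rw [← integral_const_mul]
    refine integral_mono hdiffint1 (hXYint.const_mul _) fun ω => ?_
    have hl := hLip2 (X ω) (Y ω) (X ω)
    rw [norm_sub_rev] at hl
    nlinarith [abs_le.1 hl, norm_nonneg (X ω - Y ω), sq_nonneg (W ω - h (X ω) (X ω))]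
  have q2 : ∫ ω, (W ω - h (Y ω) (Y ω)) ^ 2 ∂ℙ ≤ α ^ 2 * ∫ ω, ‖X ω - Y ω‖ ^ 2 ∂ℙ := by
    rw [← integral_const_mul]
    refine integral_mono hdiffint2 (hXYint.const_mul _) fun ω => ?_
    have hl := hLip1 (X ω) (Y ω) (Y ω)
    nlinarith [abs_le.1 hl, norm_nonneg (X ω - Y ω), sq_nonneg (W ω - h (Y ω) (Y ω))]
  -- boundedness of conditional expectations
  have hd1m : AEStronglyMeasurable (ℙ[W|MeasurableSpace.comap X inferInstance]) ℙ :=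
    (stronglyMeasurable_condExp.mono hm1).aestronglyMeasurable
  have hd2m : AEStronglyMeasurable (ℙ[W|MeasurableSpace.comap Y inferInstance]) ℙ :=
    (stronglyMeasurable_condExp.mono hm2).aestronglyMeasurable
  have hd1b : ∀ᵐ ω ∂ℙ, |(ℙ[W|MeasurableSpace.comap X inferInstance]) ω| ≤ C := by
    have h1 : ∀ᵐ ω ∂ℙ, |W ω| ≤ (C.toNNReal : ℝ) := by
      filter_upwards [hWb] with ω hω; rwa [Real.coe_toNNReal C hC]
    filter_upwards [ae_bdd_condExp_of_ae_bdd (μ := ℙ) (m := MeasurableSpace.comap X inferInstance) h1] with ω hω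
    rwa [Real.coe_toNNReal C hC] at hω
  have hd2b : ∀ᵐ ω ∂ℙ, |(ℙ[W|MeasurableSpace.comap Y inferInstance]) ω| ≤ C := by
    have h1 : ∀ᵐ ω ∂ℙ, |W ω| ≤ (C.toNNReal : ℝ) := by
      filter_upwards [hWb] with ω hω; rwa [Real.coe_toNNReal C hC]
    filter_upwards [ae_bdd_condExp_of_ae_bdd (μ := ℙ) (m := MeasurableSpace.comap Y inferInstance) h1] with ω hω
    rwa [Real.coe_toNNReal C hC] at hω
  have hres1int : Integrable (fun ω => (W ω - (ℙ[W|MeasurableSpace.comap X inferInstance]) ω) ^ 2) ℙ := by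
    refine integrable_of_bdd' (C := (2 * C) ^ 2)
      ((hWm.aestronglyMeasurable.sub hd1m).pow 2) ?_
    filter_upwards [hWb, hd1b] with ω h1 h2
    rw [abs_of_nonneg (sq_nonneg _)]
    have : |W ω - (ℙ[W|MeasurableSpace.comap X inferInstance]) ω| ≤ 2 * C := (abs_sub _ _).trans (by linarith)
    nlinarith [abs_le.1 this]
  have hres2int : Integrable (fun ω => (W ω - (ℙ[W|MeasurableSpace.comap Y inferInstance]) ω) ^ 2) ℙ := by
    refine integrable_of_bdd' (C := (2 * C) ^ 2)
      ((hWm.aestronglyMeasurable.sub hd2m).pow 2) ?_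
    filter_upwards [hWb, hd2b] with ω h1 h2
    rw [abs_of_nonneg (sq_nonneg _)]
    have : |W ω - (ℙ[W|MeasurableSpace.comap Y inferInstance]) ω| ≤ 2 * C := (abs_sub _ _).trans (by linarith)
    nlinarith [abs_le.1 this]
  have hddint : Integrable (fun ω => ((ℙ[W|MeasurableSpace.comap X inferInstance]) ω - (ℙ[W|MeasurableSpace.comap Y inferInstance]) ω) ^ 2) ℙ := by
    refine integrable_of_bdd' (C := (2 * C) ^ 2) ((hd1m.sub hd2m).pow 2) ?_
    filter_upwards [hd1b, hd2b] with ω h1 h2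
    rw [abs_of_nonneg (sq_nonneg _)]
    have : |(ℙ[W|MeasurableSpace.comap X inferInstance]) ω - (ℙ[W|MeasurableSpace.comap Y inferInstance]) ω| ≤ 2 * C := (abs_sub _ _).trans (by linarith)
    nlinarith [abs_le.1 this]
  -- middle term bound
  have hmid : ∫ ω, ((ℙ[W|MeasurableSpace.comap X inferInstance]) ω - (ℙ[W|MeasurableSpace.comap Y inferInstance]) ω) ^ 2 ∂ℙ < 2 * (α ^ 2 + β ^ 2) * ε := by
    have step1 : ∫ ω, ((ℙ[W|MeasurableSpace.comap X inferInstance]) ω - (ℙ[W|MeasurableSpace.comap Y inferInstance]) ω) ^ 2 ∂ℙ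
        ≤ ∫ ω, (2 * (W ω - (ℙ[W|MeasurableSpace.comap X inferInstance]) ω) ^ 2 + 2 * (W ω - (ℙ[W|MeasurableSpace.comap Y inferInstance]) ω) ^ 2) ∂ℙ := by
      refine integral_mono hddint ((hres1int.const_mul 2).add (hres2int.const_mul 2)) fun ω => ?_
      nlinarith [sq_nonneg ((W ω - (ℙ[W|MeasurableSpace.comap X inferInstance]) ω) + (W ω - (ℙ[W|MeasurableSpace.comap Y inferInstance]) ω))]
    have step2 : ∫ ω, (2 * (W ω - (ℙ[W|MeasurableSpace.comap X inferInstance]) ω) ^ 2 + 2 * (W ω - (ℙ[W|MeasurableSpace.comap Y inferInstance]) ω) ^ 2) ∂ℙ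
        = 2 * ∫ ω, (W ω - (ℙ[W|MeasurableSpace.comap X inferInstance]) ω) ^ 2 ∂ℙ + 2 * ∫ ω, (W ω - (ℙ[W|MeasurableSpace.comap Y inferInstance]) ω) ^ 2 ∂ℙ := by
      rw [integral_add (hres1int.const_mul 2) (hres2int.const_mul 2), integral_const_mul,
        integral_const_mul]
    have hI : 0 ≤ ∫ ω, ‖X ω - Y ω‖ ^ 2 ∂ℙ := integral_nonneg fun ω => sq_nonneg _
    have hsum : (0:ℝ) < α ^ 2 + β ^ 2 := by positivity
    have hkey : (α ^ 2 + β ^ 2) * ∫ ω, ‖X ω - Y ω‖ ^ 2 ∂ℙ < (α ^ 2 + β ^ 2) * ε :=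
      mul_lt_mul_of_pos_left hXYlt hsum
    linarith [step1, step2, p1, p2, q1, q2]
  -- transfer to fstar
  have hSc : (fun ω => fstarX (X ω)) =ᵐ[ℙ] ℙ[W|MeasurableSpace.comap X inferInstance] := hfstarX.trans hc1
  have hTc : (fun ω => fstarY (Y ω)) =ᵐ[ℙ] ℙ[W|MeasurableSpace.comap Y inferInstance] := hfstarY.trans hc2
  have hmidST : ∫ ω, (fstarX (X ω) - fstarY (Y ω)) ^ 2 ∂ℙ < 2 * (α ^ 2 + β ^ 2) * ε := by
    have : (fun ω => (fstarX (X ω) - fstarY (Y ω)) ^ 2)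
        =ᵐ[ℙ] fun ω => ((ℙ[W|MeasurableSpace.comap X inferInstance]) ω - (ℙ[W|MeasurableSpace.comap Y inferInstance]) ω) ^ 2 := by
      filter_upwards [hSc, hTc] with ω h1 h2; rw [h1, h2]
    rw [integral_congr_ae this]; exact hmid
  -- MemLp for fstar compositions
  have hSmem : MemLp (fun ω => fstarX (X ω)) 2 ℙ := by
    exact MemLp.ae_eq hSc.symm (MemLp.of_bound hd1m C (by simpa [Real.norm_eq_abs] using hd1b))
  have hTmem : MemLp (fun ω => fstarY (Y ω)) 2 ℙ := by
    exact MemLp.ae_eq hTc.symm (MemLp.of_bound hd2m C (by simpa [Real.norm_eq_abs] using hd2b))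
  -- final assembly
  have hFS : Integrable (fun ω => (fhatX (X ω) - fstarX (X ω)) ^ 2) ℙ :=
    (hfhatX.sub hSmem).integrable_sq
  have hST : Integrable (fun ω => (fstarX (X ω) - fstarY (Y ω)) ^ 2) ℙ :=
    (hSmem.sub hTmem).integrable_sq
  have hTG : Integrable (fun ω => (fstarY (Y ω) - fhatY (Y ω)) ^ 2) ℙ :=
    (hTmem.sub hfhatY).integrable_sq
  have hFG : Integrable (fun ω => (fhatX (X ω) - fhatY (Y ω)) ^ 2) ℙ :=
    (hfhatX.sub hfhatY).integrable_sq
  have main : ∫ ω, (fhatX (X ω) - fhatY (Y ω)) ^ 2 ∂ℙ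
      ≤ 3 * ∫ ω, (fhatX (X ω) - fstarX (X ω)) ^ 2 ∂ℙ
        + 3 * ∫ ω, (fstarX (X ω) - fstarY (Y ω)) ^ 2 ∂ℙ
        + 3 * ∫ ω, (fstarY (Y ω) - fhatY (Y ω)) ^ 2 ∂ℙ := by
    have hint : Integrable (fun ω => 3 * (fhatX (X ω) - fstarX (X ω)) ^ 2
        + 3 * (fstarX (X ω) - fstarY (Y ω)) ^ 2
        + 3 * (fstarY (Y ω) - fhatY (Y ω)) ^ 2) ℙ :=
      ((hFS.const_mul 3).add (hST.const_mul 3)).add (hTG.const_mul 3)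
    have step : ∫ ω, (fhatX (X ω) - fhatY (Y ω)) ^ 2 ∂ℙ
        ≤ ∫ ω, (3 * (fhatX (X ω) - fstarX (X ω)) ^ 2
            + 3 * (fstarX (X ω) - fstarY (Y ω)) ^ 2
            + 3 * (fstarY (Y ω) - fhatY (Y ω)) ^ 2) ∂ℙ := by
      refine integral_mono hFG hint fun ω => ?_
      nlinarith [sq_nonneg ((fhatX (X ω) - fstarX (X ω)) - (fstarX (X ω) - fstarY (Y ω))),
        sq_nonneg ((fstarX (X ω) - fstarY (Y ω)) - (fstarY (Y ω) - fhatY (Y ω))),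
        sq_nonneg ((fhatX (X ω) - fstarX (X ω)) - (fstarY (Y ω) - fhatY (Y ω)))]
    calc ∫ ω, (fhatX (X ω) - fhatY (Y ω)) ^ 2 ∂ℙ ≤ _ := step
      _ = 3 * ∫ ω, (fhatX (X ω) - fstarX (X ω)) ^ 2 ∂ℙ
          + 3 * ∫ ω, (fstarX (X ω) - fstarY (Y ω)) ^ 2 ∂ℙ
          + 3 * ∫ ω, (fstarY (Y ω) - fhatY (Y ω)) ^ 2 ∂ℙ := by
        have i1 : Integrable (fun ω => 3 * (fhatX (X ω) - fstarX (X ω)) ^ 2) ℙ :=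
          hFS.const_mul 3
        have i2 : Integrable (fun ω => 3 * (fstarX (X ω) - fstarY (Y ω)) ^ 2) ℙ :=
          hST.const_mul 3
        have i3 : Integrable (fun ω => 3 * (fstarY (Y ω) - fhatY (Y ω)) ^ 2) ℙ :=
          hTG.const_mul 3
        have i12 : Integrable (fun ω => 3 * (fhatX (X ω) - fstarX (X ω)) ^ 2
            + 3 * (fstarX (X ω) - fstarY (Y ω)) ^ 2) ℙ := i1.add i2
        rw [integral_add i12 i3, integral_add i1 i2,
          integral_const_mul, integral_const_mul, integral_const_mul]
  have hηY' : ηY = ∫ ω, (fstarY (Y ω) - fhatY (Y ω)) ^ 2 ∂ℙ := by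
    rw [hηY]
    congr 1
    funext ω
    ring
  rw [hηX, hηY']
  linarith [main, hmidST]
end

section
/- Let X_{ℓ−1}, X_ℓ be discrete random variables and Z ∈ ℝ^d a random vector with ‖Z‖₂ ≤ B almost surely, such that X_{ℓ−1} — X_ℓ — Z is a Markov chain. Then E[‖E[Z|X_ℓ] − E[Z|X_{ℓ−1}]‖₂²] ≤ 2B² · H(X_ℓ | X_{ℓ−1}). -/
open MeasureTheory ProbabilityTheory

lemma key_poly (u : ℝ) (hu0 : 0 ≤ u) (hu1 : u ≤ 1) : 1 - u ≤ (1 - u^2/2)^4 := by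
  have h : 0 ≤ 16 - 32*u + 24*u^3 - 8*u^5 + u^7 := by
    nlinarith [sq_nonneg (u^2 - u - 1/4), sq_nonneg (u^2 - 4/5*u - 1/4), sq_nonneg (u - 4/5), sq_nonneg (u^2 - u), sq_nonneg (u^2 + u - 1), mul_nonneg hu0 (sub_nonneg.2 hu1), sq_nonneg (u*(1-u)), sq_nonneg (u^2*(1-u)), mul_nonneg (mul_nonneg hu0 hu0) (sub_nonneg.2 hu1), sq_nonneg u, sq_nonneg (u^3 - u), mul_nonneg (sub_nonneg.2 hu1) (sq_nonneg (u - 4/5)), mul_nonneg hu0 (sq_nonneg (u - 4/5)), mul_nonneg (mul_nonneg hu0 hu0) (sq_nonneg (u-4/5)), mul_nonneg (mul_nonneg hu0 (sub_nonneg.2 hu1)) (sq_nonneg (u-4/5))]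
  nlinarith [mul_nonneg hu0 h]

lemma key_log (q : ℝ) (h0 : 0 < q) (h1 : q ≤ 1) : 2 * (1 - q)^2 ≤ Real.log q⁻¹ := by
  set u : ℝ := 1 - q with hu
  have hu0 : 0 ≤ u := by simp only [hu]; linarith
  have hu1 : u ≤ 1 := by simp only [hu]; linarith
  have h2 : (1 - u^2/2)^4 ≤ Real.exp (-(u^2/2))^4 := by
    apply pow_le_pow_left₀ (by nlinarith) (by linarith [Real.add_one_le_exp (-(u^2/2))])
  have h3 : Real.exp (-(u^2/2))^4 = Real.exp (-(2*u^2)) := by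
    rw [← Real.exp_nat_mul]; ring_nf
  have h5 : q ≤ Real.exp (-(2*u^2)) := by
    have := key_poly u hu0 hu1
    rw [← h3]; have : q = 1 - u := by rw [hu]; ring
    linarith [key_poly u hu0 hu1]
  have h6 : Real.log q ≤ -(2*u^2) := (Real.log_le_iff_le_exp h0).mpr h5
  rw [Real.log_inv]
  nlinarith


lemma ce_discrete {Ω γ F : Type*} [MeasureSpace Ω] [IsProbabilityMeasure (ℙ : Measure Ω)]
    [Fintype γ] [MeasurableSpace γ] [MeasurableSingletonClass γ]
    [NormedAddCommGroup F] [NormedSpace ℝ F] [CompleteSpace F]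
    [MeasurableSpace F] [BorelSpace F] [SecondCountableTopology F]
    (X : Ω → γ) (hX : Measurable X) (f : Ω → F) (hf : Integrable f ℙ) :
    ce X f =ᵐ[ℙ] fun ω => (ℙ (X ⁻¹' {X ω})).toReal⁻¹ • ∫ ω' in X ⁻¹' {X ω}, f ω' ∂ℙ := by
  classical
  have hm : MeasurableSpace.comap X inferInstance ≤ (inferInstance : MeasurableSpace Ω) :=
    hX.comap_le
  set g : Ω → F := fun ω => (ℙ (X ⁻¹' {X ω})).toReal⁻¹ • ∫ ω' in X ⁻¹' {X ω}, f ω' ∂ℙ with hg_def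
  have hXm : Measurable[MeasurableSpace.comap X inferInstance] X :=
    Measurable.of_comap_le le_rfl
  have hgm : Measurable[MeasurableSpace.comap X inferInstance] g :=
    (measurable_of_countable
      (fun b : γ => (ℙ (X ⁻¹' {b})).toReal⁻¹ • ∫ ω' in X ⁻¹' {b}, f ω' ∂ℙ)).comp hXm
  have hgsm : StronglyMeasurable[MeasurableSpace.comap X inferInstance] g := hgm.stronglyMeasurable
  have hgint : Integrable g ℙ := by
    refine Integrable.mono'
      (integrable_const (∑ b : γ, ‖(ℙ (X ⁻¹' {b})).toReal⁻¹ • ∫ ω' in X ⁻¹' {b}, f ω' ∂ℙ‖))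
      ((hgm.mono hm le_rfl).aestronglyMeasurable) (Filter.Eventually.of_forall fun ω => ?_)
    exact Finset.single_le_sum (f := fun b => ‖(ℙ (X ⁻¹' {b})).toReal⁻¹ • ∫ ω' in X ⁻¹' {b}, f ω' ∂ℙ‖)
      (fun b _ => norm_nonneg _) (Finset.mem_univ (X ω))
  have hatom : ∀ b : γ, ∫ ω in X ⁻¹' {b}, g ω ∂ℙ = ∫ ω in X ⁻¹' {b}, f ω ∂ℙ := by
    intro b
    have hconst : ∀ ω ∈ X ⁻¹' {b},
        g ω = (ℙ (X ⁻¹' {b})).toReal⁻¹ • ∫ ω' in X ⁻¹' {b}, f ω' ∂ℙ := by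
      intro ω hω
      have hωb : X ω = b := hω
      simp only [hg_def, hωb]
    rw [setIntegral_congr_fun (hX (measurableSet_singleton b)) hconst, setIntegral_const]
    by_cases h0 : ℙ (X ⁻¹' {b}) = 0
    · have hz : (ℙ : Measure Ω).restrict (X ⁻¹' {b}) = 0 := Measure.restrict_eq_zero.mpr h0
      rw [h0, hz]
      simp
    · rw [smul_smul, measureReal_def, mul_inv_cancel₀ (ENNReal.toReal_ne_zero.mpr ⟨h0, measure_ne_top _ _⟩), one_smul]
  have hdisj : ∀ (b b' : γ), b ≠ b' → Disjoint (X ⁻¹' {b}) (X ⁻¹' {b'}) := by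
    intro b b' hne
    exact Set.disjoint_left.mpr fun ω h1 h2 => hne ((Set.mem_preimage.mp h1).symm.trans h2)
  have key := ae_eq_condExp_of_forall_setIntegral_eq (μ := ℙ) hm hf
    (fun s _ _ => hgint.integrableOn) (fun s hs _ => ?_) (hgsm.aestronglyMeasurable)
  · exact key.symm
  · obtain ⟨u, -, rfl⟩ := hs
    have huni : X ⁻¹' u = ⋃ b ∈ u.toFinite.toFinset, X ⁻¹' {b} := by
      ext ω
      simp only [Set.mem_preimage, Set.mem_iUnion, Set.Finite.mem_toFinset,
        Set.mem_singleton_iff]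
      exact ⟨fun h => ⟨X ω, h, rfl⟩, fun ⟨b, hb, hXb⟩ => hXb ▸ hb⟩
    rw [huni,
      integral_biUnion_finset _ (fun b _ => hX (measurableSet_singleton b))
        (fun b _ b' _ hne => hdisj b b' hne) (fun b _ => hgint.integrableOn),
      integral_biUnion_finset _ (fun b _ => hX (measurableSet_singleton b))
        (fun b _ b' _ hne => hdisj b b' hne) (fun b _ => hf.integrableOn)]
    exact Finset.sum_congr rfl fun b _ => hatom b


/-- Theorem 5: `Xprev = X_{ℓ-1}` and `Xcur = X_ℓ` are discrete (finitely supported) random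
variables, `Z` is an `ℝᵈ`-valued random vector with `‖Z‖ ≤ B` a.s., and
`X_{ℓ-1} — X_ℓ — Z` is a Markov chain (`Z` is conditionally independent of `X_{ℓ-1}` given
`X_ℓ`, stated multiplicatively). Then
`E[‖E[Z|X_ℓ] − E[Z|X_{ℓ-1}]‖²] ≤ 2B²·H(X_ℓ | X_{ℓ-1})`, with the conditional Shannon entropy
(in nats) written out as a finite sum. -/
theorem stmt_8 {Ω S T : Type*} [MeasureSpace Ω] [IsProbabilityMeasure (ℙ : Measure Ω)]
    [Fintype S] [MeasurableSpace S] [MeasurableSingletonClass S]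
    [Fintype T] [MeasurableSpace T] [MeasurableSingletonClass T]
    {d : ℕ} (Xprev : Ω → S) (Xcur : Ω → T)
    (hXp : Measurable Xprev) (hXc : Measurable Xcur)
    (Z : Ω → EuclideanSpace ℝ (Fin d)) (hZm : Measurable Z)
    (B : ℝ) (hB : ∀ᵐ ω ∂ℙ, ‖Z ω‖ ≤ B)
    (hMarkov : ∀ (A : Set (EuclideanSpace ℝ (Fin d))), MeasurableSet A → ∀ (a : S) (b : T),
      ℙ (Z ⁻¹' A ∩ Xcur ⁻¹' {b} ∩ Xprev ⁻¹' {a}) * ℙ (Xcur ⁻¹' {b})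
        = ℙ (Z ⁻¹' A ∩ Xcur ⁻¹' {b}) * ℙ (Xcur ⁻¹' {b} ∩ Xprev ⁻¹' {a})) :
    ∫ ω, ‖ce Xcur Z ω - ce Xprev Z ω‖ ^ 2 ∂ℙ
      ≤ 2 * B ^ 2 * ∑ a : S, ∑ b : T,
          (ℙ (Xprev ⁻¹' {a} ∩ Xcur ⁻¹' {b})).toReal *
            Real.log ((ℙ (Xprev ⁻¹' {a})).toReal
              / (ℙ (Xprev ⁻¹' {a} ∩ Xcur ⁻¹' {b})).toReal) := by
  classical
  have hZint : Integrable Z ℙ :=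
    Integrable.mono' (integrable_const B) hZm.aestronglyMeasurable hB
  have hB0 : 0 ≤ B := by
    obtain ⟨ω, hω⟩ := hB.exists
    exact (norm_nonneg _).trans hω
  set ν : T → EuclideanSpace ℝ (Fin d) :=
    fun b => (ℙ (Xcur ⁻¹' {b})).toReal⁻¹ • ∫ ω in Xcur ⁻¹' {b}, Z ω ∂ℙ with hν_def
  set μv : S → EuclideanSpace ℝ (Fin d) :=
    fun a => (ℙ (Xprev ⁻¹' {a})).toReal⁻¹ • ∫ ω in Xprev ⁻¹' {a}, Z ω ∂ℙ with hμv_def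
  have hInorm : ∀ (s : Set Ω), ‖∫ ω in s, Z ω ∂ℙ‖ ≤ B * (ℙ s).toReal := by
    intro s
    calc ‖∫ ω in s, Z ω ∂ℙ‖ ≤ ∫ ω in s, ‖Z ω‖ ∂ℙ := norm_integral_le_integral_norm _
      _ ≤ ∫ (_ : Ω) in s, B ∂ℙ :=
          integral_mono_ae hZint.norm.restrict (integrable_const B) (ae_restrict_of_ae hB)
      _ = B * (ℙ s).toReal := by rw [setIntegral_const, smul_eq_mul, mul_comm, measureReal_def]
  have hmeanB : ∀ (s : Set Ω), ‖(ℙ s).toReal⁻¹ • ∫ ω in s, Z ω ∂ℙ‖ ≤ B := by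
    intro s
    by_cases h0 : ℙ s = 0
    · rw [Measure.restrict_eq_zero.mpr h0]
      simp [hB0]
    · have hc : 0 < (ℙ s).toReal := ENNReal.toReal_pos h0 (measure_ne_top _ _)
      rw [norm_smul, Real.norm_eq_abs, abs_inv, abs_of_nonneg hc.le]
      calc (ℙ s).toReal⁻¹ * ‖∫ ω in s, Z ω ∂ℙ‖ ≤ (ℙ s).toReal⁻¹ * (B * (ℙ s).toReal) := by
            exact mul_le_mul_of_nonneg_left (hInorm s) (inv_nonneg.mpr hc.le)
        _ = B := by field_simp
  have hνB : ∀ b, ‖ν b‖ ≤ B := fun b => hmeanB _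
  have hμvB : ∀ a, ‖μv a‖ ≤ B := fun a => hmeanB _
  -- Markov consequence on set integrals
  have hZab : ∀ (a : S) (b : T),
      ∫ ω in Xprev ⁻¹' {a} ∩ Xcur ⁻¹' {b}, Z ω ∂ℙ
        = (ℙ (Xprev ⁻¹' {a} ∩ Xcur ⁻¹' {b})).toReal • ν b := by
    intro a b
    by_cases h0 : ℙ (Xcur ⁻¹' {b}) = 0
    · have h1 : ℙ (Xprev ⁻¹' {a} ∩ Xcur ⁻¹' {b}) = 0 :=
        measure_mono_null Set.inter_subset_right h0
      rw [Measure.restrict_eq_zero.mpr h1, h1]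
      simp
    · have hmeq : (ℙ (Xcur ⁻¹' {b})) • Measure.map Z ((ℙ : Measure Ω).restrict (Xprev ⁻¹' {a} ∩ Xcur ⁻¹' {b}))
          = (ℙ (Xprev ⁻¹' {a} ∩ Xcur ⁻¹' {b})) • Measure.map Z ((ℙ : Measure Ω).restrict (Xcur ⁻¹' {b})) := by
        ext A hA
        rw [Measure.smul_apply, Measure.smul_apply, Measure.map_apply hZm hA,
          Measure.map_apply hZm hA, Measure.restrict_apply (hZm hA), Measure.restrict_apply (hZm hA),
          smul_eq_mul, smul_eq_mul]
        have h2 := hMarkov A hA a b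
        have e1 : Z ⁻¹' A ∩ (Xprev ⁻¹' {a} ∩ Xcur ⁻¹' {b}) = Z ⁻¹' A ∩ Xcur ⁻¹' {b} ∩ Xprev ⁻¹' {a} := by
          ext ω; simp only [Set.mem_inter_iff, Set.mem_preimage]; tauto
        have e2 : Xprev ⁻¹' {a} ∩ Xcur ⁻¹' {b} = Xcur ⁻¹' {b} ∩ Xprev ⁻¹' {a} := Set.inter_comm _ _
        rw [e1, e2, mul_comm (ℙ (Xcur ⁻¹' {b})) _, h2, mul_comm]
      have hint := congrArg (fun μ' : Measure (EuclideanSpace ℝ (Fin d)) => ∫ x, x ∂μ') hmeq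
      simp only [integral_smul_measure] at hint
      have hmap1 : ∫ x, x ∂(Measure.map Z ((ℙ : Measure Ω).restrict (Xprev ⁻¹' {a} ∩ Xcur ⁻¹' {b})))
          = ∫ ω in Xprev ⁻¹' {a} ∩ Xcur ⁻¹' {b}, Z ω ∂ℙ :=
        integral_map hZm.aemeasurable measurable_id.aestronglyMeasurable
      have hmap2 : ∫ x, x ∂(Measure.map Z ((ℙ : Measure Ω).restrict (Xcur ⁻¹' {b})))
          = ∫ ω in Xcur ⁻¹' {b}, Z ω ∂ℙ :=
        integral_map hZm.aemeasurable measurable_id.aestronglyMeasurable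
      rw [hmap1, hmap2] at hint
      have hc : (ℙ (Xcur ⁻¹' {b})).toReal ≠ 0 :=
        ENNReal.toReal_ne_zero.mpr ⟨h0, measure_ne_top _ _⟩
      have := congrArg (fun v => (ℙ (Xcur ⁻¹' {b})).toReal⁻¹ • v) hint
      simp only [smul_smul, inv_mul_cancel₀ hc, one_smul] at this
      rw [this]
      show _ = (ℙ (Xprev ⁻¹' {a} ∩ Xcur ⁻¹' {b})).toReal •
        (ℙ (Xcur ⁻¹' {b})).toReal⁻¹ • ∫ ω in Xcur ⁻¹' {b}, Z ω ∂ℙ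
      rw [smul_smul, mul_comm]
  -- partition identity
  have hsum : ∀ a : S, ℙ (Xprev ⁻¹' {a}) = ∑ b : T, ℙ (Xprev ⁻¹' {a} ∩ Xcur ⁻¹' {b}) := by
    intro a
    have hu : Xprev ⁻¹' {a} = ⋃ b : T, (Xprev ⁻¹' {a} ∩ Xcur ⁻¹' {b}) := by
      ext ω; simp
    have hd : Pairwise (Function.onFun Disjoint fun b : T => Xprev ⁻¹' {a} ∩ Xcur ⁻¹' {b}) := by
      intro b b' hne
      exact Set.disjoint_left.mpr fun ω h1 h2 => hne ((h1.2 : Xcur ω = b).symm.trans h2.2)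
    calc ℙ (Xprev ⁻¹' {a}) = ℙ (⋃ b : T, (Xprev ⁻¹' {a} ∩ Xcur ⁻¹' {b})) := congrArg _ hu
      _ = ∑' b : T, ℙ (Xprev ⁻¹' {a} ∩ Xcur ⁻¹' {b}) := measure_iUnion hd fun b =>
          (hXp (measurableSet_singleton a)).inter (hXc (measurableSet_singleton b))
      _ = ∑ b : T, ℙ (Xprev ⁻¹' {a} ∩ Xcur ⁻¹' {b}) := tsum_fintype _
  -- decomposition of the prev-conditional mean
  have hμdec : ∀ a : S, μv a = ∑ b : T,
      ((ℙ (Xprev ⁻¹' {a} ∩ Xcur ⁻¹' {b})).toReal / (ℙ (Xprev ⁻¹' {a})).toReal) • ν b := by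
    intro a
    have hu : Xprev ⁻¹' {a} = ⋃ b : T, (Xprev ⁻¹' {a} ∩ Xcur ⁻¹' {b}) := by
      ext ω; simp
    have hd : Pairwise (Function.onFun Disjoint fun b : T => Xprev ⁻¹' {a} ∩ Xcur ⁻¹' {b}) := by
      intro b b' hne
      exact Set.disjoint_left.mpr fun ω h1 h2 => hne ((h1.2 : Xcur ω = b).symm.trans h2.2)
    have hsplit : ∫ ω in Xprev ⁻¹' {a}, Z ω ∂ℙ
        = ∑ b : T, ∫ ω in Xprev ⁻¹' {a} ∩ Xcur ⁻¹' {b}, Z ω ∂ℙ := by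
      calc ∫ ω in Xprev ⁻¹' {a}, Z ω ∂ℙ
          = ∫ ω in (⋃ b : T, Xprev ⁻¹' {a} ∩ Xcur ⁻¹' {b}), Z ω ∂ℙ := by rw [← hu]
        _ = ∑ b : T, ∫ ω in Xprev ⁻¹' {a} ∩ Xcur ⁻¹' {b}, Z ω ∂ℙ :=
            integral_iUnion_fintype (fun b => (hXp (measurableSet_singleton a)).inter
              (hXc (measurableSet_singleton b))) hd (fun b => hZint.integrableOn)
    show (ℙ (Xprev ⁻¹' {a})).toReal⁻¹ • ∫ ω in Xprev ⁻¹' {a}, Z ω ∂ℙ = _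
    rw [hsplit, Finset.smul_sum]
    refine Finset.sum_congr rfl fun b _ => ?_
    rw [hZab a b, smul_smul, div_eq_mul_inv, mul_comm]
  -- measurability / integrability of the squared-distance function
  have hg_meas : Measurable fun ω => ‖ν (Xcur ω) - μv (Xprev ω)‖ ^ 2 :=
    ((((measurable_of_countable ν).comp hXc).sub
      ((measurable_of_countable μv).comp hXp)).norm).pow_const 2
  have hg_int : Integrable (fun ω => ‖ν (Xcur ω) - μv (Xprev ω)‖ ^ 2) ℙ := by
    refine Integrable.mono' (integrable_const ((2 * B) ^ 2)) hg_meas.aestronglyMeasurable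
      (Filter.Eventually.of_forall fun ω => ?_)
    have h1 : ‖ν (Xcur ω) - μv (Xprev ω)‖ ≤ 2 * B := by
      calc ‖ν (Xcur ω) - μv (Xprev ω)‖ ≤ ‖ν (Xcur ω)‖ + ‖μv (Xprev ω)‖ := norm_sub_le _ _
        _ ≤ B + B := add_le_add (hνB _) (hμvB _)
        _ = 2 * B := by ring
    rw [Real.norm_eq_abs, abs_of_nonneg (by positivity)]
    exact pow_le_pow_left₀ (norm_nonneg _) h1 2
  -- pairwise disjoint joint atoms
  have hmeaspair : ∀ p : S × T, MeasurableSet (Xprev ⁻¹' {p.1} ∩ Xcur ⁻¹' {p.2}) := fun p =>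
    (hXp (measurableSet_singleton p.1)).inter (hXc (measurableSet_singleton p.2))
  have hdisjpair : Pairwise (Function.onFun Disjoint fun p : S × T => Xprev ⁻¹' {p.1} ∩ Xcur ⁻¹' {p.2}) := by
    intro p p' hne
    refine Set.disjoint_left.mpr fun ω h1 h2 => hne ?_
    exact Prod.ext ((h1.1 : Xprev ω = p.1).symm.trans h2.1)
      ((h1.2 : Xcur ω = p.2).symm.trans h2.2)
  -- compute the LHS
  have hceC := ce_discrete Xcur hXc Z hZint
  have hceP := ce_discrete Xprev hXp Z hZint
  have hLHS1 : ∫ ω, ‖ce Xcur Z ω - ce Xprev Z ω‖ ^ 2 ∂ℙ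
      = ∫ ω, ‖ν (Xcur ω) - μv (Xprev ω)‖ ^ 2 ∂ℙ := by
    refine integral_congr_ae ?_
    filter_upwards [hceC, hceP] with ω h1 h2
    rw [show ν (Xcur ω) = (ℙ (Xcur ⁻¹' {Xcur ω})).toReal⁻¹ • ∫ ω' in Xcur ⁻¹' {Xcur ω}, Z ω' ∂ℙ
        from rfl,
      show μv (Xprev ω) = (ℙ (Xprev ⁻¹' {Xprev ω})).toReal⁻¹ • ∫ ω' in Xprev ⁻¹' {Xprev ω}, Z ω' ∂ℙ
        from rfl, ← h1, ← h2]
  have huniv : (Set.univ : Set Ω) = ⋃ p : S × T, (Xprev ⁻¹' {p.1} ∩ Xcur ⁻¹' {p.2}) := by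
    ext ω
    simp only [Set.mem_univ, true_iff, Set.mem_iUnion, Set.mem_inter_iff, Set.mem_preimage,
      Set.mem_singleton_iff]
    exact ⟨(Xprev ω, Xcur ω), rfl, rfl⟩
  have hLHS2 : ∫ ω, ‖ν (Xcur ω) - μv (Xprev ω)‖ ^ 2 ∂ℙ
      = ∑ a : S, ∑ b : T, (ℙ (Xprev ⁻¹' {a} ∩ Xcur ⁻¹' {b})).toReal * ‖ν b - μv a‖ ^ 2 := by
    have hpoint : ∀ p : S × T,
        ∫ ω in Xprev ⁻¹' {p.1} ∩ Xcur ⁻¹' {p.2}, ‖ν (Xcur ω) - μv (Xprev ω)‖ ^ 2 ∂ℙ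
          = (ℙ (Xprev ⁻¹' {p.1} ∩ Xcur ⁻¹' {p.2})).toReal * ‖ν p.2 - μv p.1‖ ^ 2 := by
      rintro ⟨a, b⟩
      have hconst : ∀ ω ∈ Xprev ⁻¹' {a} ∩ Xcur ⁻¹' {b},
          ‖ν (Xcur ω) - μv (Xprev ω)‖ ^ 2 = ‖ν b - μv a‖ ^ 2 := by
        rintro ω ⟨h1, h2⟩
        rw [show Xcur ω = b from h2, show Xprev ω = a from h1]
      rw [setIntegral_congr_fun (hmeaspair ⟨a, b⟩) hconst, setIntegral_const, smul_eq_mul, measureReal_def]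
    calc ∫ ω, ‖ν (Xcur ω) - μv (Xprev ω)‖ ^ 2 ∂ℙ
        = ∫ ω in Set.univ, ‖ν (Xcur ω) - μv (Xprev ω)‖ ^ 2 ∂ℙ := by rw [setIntegral_univ]
      _ = ∫ ω in ⋃ p : S × T, (Xprev ⁻¹' {p.1} ∩ Xcur ⁻¹' {p.2}),
            ‖ν (Xcur ω) - μv (Xprev ω)‖ ^ 2 ∂ℙ := by rw [← huniv]
      _ = ∑ p : S × T, ∫ ω in Xprev ⁻¹' {p.1} ∩ Xcur ⁻¹' {p.2},
            ‖ν (Xcur ω) - μv (Xprev ω)‖ ^ 2 ∂ℙ :=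
          integral_iUnion_fintype hmeaspair hdisjpair (fun p => hg_int.integrableOn)
      _ = ∑ p : S × T, (ℙ (Xprev ⁻¹' {p.1} ∩ Xcur ⁻¹' {p.2})).toReal * ‖ν p.2 - μv p.1‖ ^ 2 :=
          Finset.sum_congr rfl fun p _ => hpoint p
      _ = ∑ a : S, ∑ b : T, (ℙ (Xprev ⁻¹' {a} ∩ Xcur ⁻¹' {b})).toReal * ‖ν b - μv a‖ ^ 2 :=
          Fintype.sum_prod_type _
  rw [hLHS1, hLHS2, Finset.mul_sum]
  refine Finset.sum_le_sum fun a _ => ?_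
  rw [Finset.mul_sum]
  refine Finset.sum_le_sum fun b _ => ?_
  by_cases h0 : ℙ (Xprev ⁻¹' {a} ∩ Xcur ⁻¹' {b}) = 0
  · simp [h0]
  · have ha0 : ℙ (Xprev ⁻¹' {a}) ≠ 0 := fun h =>
      h0 (measure_mono_null Set.inter_subset_left h)
    set pa : ℝ := (ℙ (Xprev ⁻¹' {a})).toReal with hpa_def
    set pab : ℝ := (ℙ (Xprev ⁻¹' {a} ∩ Xcur ⁻¹' {b})).toReal with hpab_def
    have hpa : 0 < pa := ENNReal.toReal_pos ha0 (measure_ne_top _ _)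
    have hpab : 0 < pab := ENNReal.toReal_pos h0 (measure_ne_top _ _)
    set q : ℝ := pab / pa with hq_def
    have hq0 : 0 < q := div_pos hpab hpa
    have hq1 : q ≤ 1 := by
      rw [hq_def, div_le_one hpa]
      exact ENNReal.toReal_mono (measure_ne_top _ _) (measure_mono Set.inter_subset_left)
    -- the convex weights
    set r : T → ℝ := fun b' => (ℙ (Xprev ⁻¹' {a} ∩ Xcur ⁻¹' {b'})).toReal / pa with hr_def
    have hr_nonneg : ∀ b', 0 ≤ r b' := fun b' => div_nonneg ENNReal.toReal_nonneg hpa.le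
    have hr_sum : ∑ b' : T, r b' = 1 := by
      simp only [hr_def]
      rw [← Finset.sum_div, div_eq_one_iff_eq hpa.ne']
      rw [hpa_def, hsum a, ENNReal.toReal_sum (fun b' _ => measure_ne_top _ _)]
    have hdist : ‖ν b - μv a‖ ≤ 2 * B * (1 - q) := by
      have hνb : ν b = ∑ b' : T, r b' • ν b := by
        rw [← Finset.sum_smul, hr_sum, one_smul]
      calc ‖ν b - μv a‖ = ‖∑ b' : T, r b' • (ν b - ν b')‖ := by
            have hr_apply : ∀ b' : T,
                ((ℙ (Xprev ⁻¹' {a} ∩ Xcur ⁻¹' {b'})).toReal / (ℙ (Xprev ⁻¹' {a})).toReal) • ν b'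
                  = r b' • ν b' := fun b' => rfl
            rw [hμdec a]
            simp only [hr_apply]
            congr 1
            conv_lhs => rw [hνb]
            rw [← Finset.sum_sub_distrib]
            exact Finset.sum_congr rfl fun b' _ => (smul_sub _ _ _).symm
        _ ≤ ∑ b' : T, ‖r b' • (ν b - ν b')‖ := norm_sum_le _ _
        _ ≤ ∑ b' : T, (if b' = b then 0 else r b' * (2 * B)) := by
            refine Finset.sum_le_sum fun b' _ => ?_
            by_cases hbb : b' = b
            · simp [hbb]
            · simp only [hbb, if_false]
              rw [norm_smul, Real.norm_eq_abs, abs_of_nonneg (hr_nonneg b')]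
              refine mul_le_mul_of_nonneg_left ?_ (hr_nonneg b')
              calc ‖ν b - ν b'‖ ≤ ‖ν b‖ + ‖ν b'‖ := norm_sub_le _ _
                _ ≤ B + B := add_le_add (hνB _) (hνB _)
                _ = 2 * B := by ring
        _ = (∑ b' ∈ Finset.univ.erase b, r b' * (2 * B)) := by
            rw [← Finset.sum_erase (f := fun b' => if b' = b then (0:ℝ) else r b' * (2 * B))
              (a := b) Finset.univ (by simp)]
            exact Finset.sum_congr rfl fun b' hb' => by
              simp [Finset.ne_of_mem_erase hb']
        _ = 2 * B * (1 - q) := by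
            have h1 : r b * (2 * B) + ∑ b' ∈ Finset.univ.erase b, r b' * (2 * B)
                = ∑ b' : T, r b' * (2 * B) :=
              Finset.add_sum_erase Finset.univ (fun b' => r b' * (2 * B)) (Finset.mem_univ b)
            have hsum2 : ∑ b' : T, r b' * (2 * B) = 2 * B := by
              rw [← Finset.sum_mul, hr_sum, one_mul]
            have hrb : r b = q := rfl
            rw [hrb] at h1
            linarith
    have hsq : ‖ν b - μv a‖ ^ 2 ≤ (2 * B * (1 - q)) ^ 2 :=
      pow_le_pow_left₀ (norm_nonneg _) hdist 2
    have hlog := key_log q hq0 hq1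
    have hqinv : Real.log q⁻¹ = Real.log (pa / pab) := by rw [hq_def, inv_div]
    calc pab * ‖ν b - μv a‖ ^ 2 ≤ pab * (2 * B ^ 2 * Real.log (pa / pab)) := by
          refine mul_le_mul_of_nonneg_left ?_ ENNReal.toReal_nonneg
          calc ‖ν b - μv a‖ ^ 2 ≤ (2 * B * (1 - q)) ^ 2 := hsq
            _ = 2 * B ^ 2 * (2 * (1 - q) ^ 2) := by ring
            _ ≤ 2 * B ^ 2 * Real.log q⁻¹ :=
                mul_le_mul_of_nonneg_left hlog (by positivity)
            _ = 2 * B ^ 2 * Real.log (pa / pab) := by rw [hqinv]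
      _ = 2 * B ^ 2 * (pab * Real.log (pa / pab)) := by ring
end

section
/- Let X, Y be random variables with shared finite support 𝒳, ρ symmetric on 𝒳×𝒳, B̄(t,x) = {x' ∈ 𝒳 : ρ(x,x') ≤ t}, P_t = P[ρ(X,Y) > t], p_min = inf_x P[Y ∈ B̄(t,x)], and p_max = sup_x P[Y ∈ B̄(t,x)], with 0 ≤ p_min < 1, 0 < p_max ≤ 1, and p_min + p_max < 1. Then the mutual information satisfies I(X; Y) ≥ (1 − P_t)·log(1/p_max) − P_t·log(1 − p_min) − H₂(P_t). -/
open Real Finset in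
private lemma log_sum_ineq' {ι : Type*} (s : Finset ι) (f g : ι → ℝ)
    (hf : ∀ i ∈ s, 0 ≤ f i) (hg : ∀ i ∈ s, 0 ≤ g i)
    (hfg : ∀ i ∈ s, g i = 0 → f i = 0) :
    (∑ i ∈ s, f i) * Real.log ((∑ i ∈ s, f i) / (∑ i ∈ s, g i)) ≤
      ∑ i ∈ s, f i * Real.log (f i / g i) := by
  classical
  set s' := s.filter (fun i => g i ≠ 0) with hs'
  have hsub : s' ⊆ s := filter_subset _ _
  have hF : ∑ i ∈ s, f i = ∑ i ∈ s', f i := by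
    refine (Finset.sum_subset hsub ?_).symm
    intro i hi hni
    exact hfg i hi (by simpa [hs', hi] using hni)
  have hG : ∑ i ∈ s, g i = ∑ i ∈ s', g i := by
    refine (Finset.sum_subset hsub ?_).symm
    intro i hi hni
    simpa [hs', hi] using hni
  have hFL : ∑ i ∈ s, f i * Real.log (f i / g i)
      = ∑ i ∈ s', f i * Real.log (f i / g i) := by
    refine (Finset.sum_subset hsub ?_).symm
    intro i hi hni
    have := hfg i hi (by simpa [hs', hi] using hni)
    simp [this]
  rw [hF, hG, hFL]
  set P := ∑ i ∈ s', f i with hP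
  set Q := ∑ i ∈ s', g i with hQ
  have hgpos : ∀ i ∈ s', 0 < g i := by
    intro i hi
    rcases Finset.mem_filter.mp hi with ⟨hi', hne⟩
    exact lt_of_le_of_ne (hg i hi') (Ne.symm hne)
  rcases eq_or_lt_of_le (Finset.sum_nonneg fun i hi => hg i (hsub hi)) with hQ0 | hQpos
  · -- Q = 0, so s' = ∅
    have hz : ∀ i ∈ s', g i = 0 :=
      (Finset.sum_eq_zero_iff_of_nonneg (fun i hi => hg i (hsub hi))).mp hQ0.symm
    have hse : s' = ∅ := by
      rw [Finset.eq_empty_iff_forall_notMem]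
      intro i hi
      exact (Finset.mem_filter.mp hi).2 (hz i hi)
    have hP0 : P = 0 := by rw [hP, hse]; simp
    have hQz : Q = 0 := by rw [hQ, hse]; simp
    simp [hP0, hQz, hse]
  · -- Q > 0: Jensen
    have hQne : Q ≠ 0 := ne_of_gt hQpos
    have key := ConvexOn.map_sum_le (t := s') (w := fun i => g i / Q)
      (p := fun i => f i / g i) Real.convexOn_mul_log
      (fun i _ => div_nonneg (hg i (hsub ‹_›)) hQpos.le)
      (by rw [← Finset.sum_div]; field_simp; exact hQ.symm)
      (fun i hi => Set.mem_Ici.mpr (div_nonneg (hf i (hsub hi)) (hgpos i hi).le))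
    have hmean : ∑ i ∈ s', g i / Q * (f i / g i) = P / Q := by
      rw [hP, Finset.sum_div]
      refine Finset.sum_congr rfl fun i hi => ?_
      have := (hgpos i hi).ne'
      field_simp
    simp only [smul_eq_mul] at key
    rw [hmean] at key
    have hrhs : ∑ i ∈ s', (g i / Q) * ((f i / g i) * Real.log (f i / g i))
        = (∑ i ∈ s', f i * Real.log (f i / g i)) / Q := by
      rw [Finset.sum_div]
      refine Finset.sum_congr rfl fun i hi => ?_
      have := (hgpos i hi).ne'
      field_simp
    rw [hrhs] at key
    have := mul_le_mul_of_nonneg_left key hQpos.le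
    calc P * Real.log (P / Q) = Q * (P / Q * Real.log (P / Q)) := by
          field_simp
      _ ≤ Q * ((∑ i ∈ s', f i * Real.log (f i / g i)) / Q) := this
      _ = ∑ i ∈ s', f i * Real.log (f i / g i) := by field_simp


private lemma final_ineq' (Pt q2 pmin pmax : ℝ) (hPt0 : 0 ≤ Pt) (hPt1 : Pt ≤ 1)
    (hq2a : pmin ≤ q2) (hq2b : q2 ≤ pmax)
    (hpmin0 : 0 ≤ pmin) (hpmin1 : pmin < 1) (hpmax0 : 0 < pmax) (hpmax1 : pmax ≤ 1)
    (h10 : 1 - q2 = 0 → Pt = 0) (h20 : q2 = 0 → 1 - Pt = 0) :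
    (1 - Pt) * Real.log (1 / pmax) - Pt * Real.log (1 - pmin)
        - (-(Pt * Real.log Pt) - (1 - Pt) * Real.log (1 - Pt))
      ≤ Pt * Real.log (Pt / (1 - q2)) + (1 - Pt) * Real.log ((1 - Pt) / q2) := by
  have hlog1 : Real.log (1 / pmax) = -Real.log pmax := by
    rw [one_div, Real.log_inv]
  rcases eq_or_lt_of_le hPt0 with h0 | h0
  · -- Pt = 0
    have hq2pos : 0 < q2 := by
      rcases eq_or_lt_of_le (hpmin0.trans hq2a) with h | h
      · exact absurd (h20 h.symm) (by rw [← h0]; norm_num)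
      · exact h
    have : Real.log q2 ≤ Real.log pmax := Real.log_le_log hq2pos hq2b
    rw [← h0]
    simp only [sub_zero, zero_mul, neg_zero, zero_sub, one_mul, zero_add, Real.log_one]
    rw [hlog1, Real.log_div one_ne_zero hq2pos.ne', Real.log_one]
    linarith
  rcases eq_or_lt_of_le hPt1 with h1 | h1
  · -- Pt = 1
    have hq1pos : 0 < 1 - q2 := by
      rcases eq_or_lt_of_le (show q2 ≤ 1 from hq2b.trans hpmax1) with h | h
      · exact absurd (h10 (by linarith)) (by rw [h1]; norm_num)
      · linarith
    have hle : 1 - q2 ≤ 1 - pmin := by linarith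
    have : Real.log (1 - q2) ≤ Real.log (1 - pmin) := Real.log_le_log hq1pos hle
    rw [h1]
    simp only [sub_self, zero_mul, one_mul, Real.log_one, neg_zero, sub_zero, add_zero,
      mul_zero, zero_sub]
    rw [Real.log_div one_ne_zero hq1pos.ne', Real.log_one]
    linarith
  · -- 0 < Pt < 1
    have hq2pos : 0 < q2 := by
      rcases eq_or_lt_of_le (hpmin0.trans hq2a) with h | h
      · exact absurd (h20 h.symm) (by linarith)
      · exact h
    have hq1pos : 0 < 1 - q2 := by
      rcases eq_or_lt_of_le (show q2 ≤ 1 from hq2b.trans hpmax1) with h | h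
      · exact absurd (h10 (by linarith)) (by linarith)
      · linarith
    have l1 : Real.log (1 - q2) ≤ Real.log (1 - pmin) :=
      Real.log_le_log hq1pos (by linarith)
    have l2 : Real.log q2 ≤ Real.log pmax := Real.log_le_log hq2pos hq2b
    rw [Real.log_div (ne_of_gt h0) hq1pos.ne', Real.log_div (by linarith) hq2pos.ne', hlog1]
    nlinarith [mul_le_mul_of_nonneg_left l1 hPt0, mul_le_mul_of_nonneg_left l2 (by linarith : (0:ℝ) ≤ 1 - Pt)]


open Classical in
/-- Mutual information lower bound from proximity (Braun–Pokutta).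
`p a b` is the joint pmf of `(X, Y)` on the shared finite support `𝒳`; the left-hand side of
the conclusion is the mutual information `I(X; Y)`; `Pt = P[ρ(X,Y) > t]`;
`pmin = inf_x P[Y ∈ B̄(t,x)]`, `pmax = sup_x P[Y ∈ B̄(t,x)]`; the binary entropy `H₂(Pt)` is
expanded as `-Pt·log Pt - (1-Pt)·log(1-Pt)`. -/
theorem stmt_13 {𝒳 : Type*} [Fintype 𝒳] [Nonempty 𝒳]
    (p : 𝒳 → 𝒳 → ℝ) (hp0 : ∀ a b, 0 ≤ p a b) (hp1 : ∑ a, ∑ b, p a b = 1)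
    (ρ : 𝒳 → 𝒳 → ℝ) (hsym : ∀ a b, ρ a b = ρ b a) (t : ℝ)
    (Pt : ℝ) (hPt : Pt = ∑ a, ∑ b, if t < ρ a b then p a b else 0)
    (pmin pmax : ℝ)
    (hpmin : pmin = Finset.univ.inf' Finset.univ_nonempty
      (fun x : 𝒳 => ∑ b, if ρ x b ≤ t then (∑ a, p a b) else 0))
    (hpmax : pmax = Finset.univ.sup' Finset.univ_nonempty
      (fun x : 𝒳 => ∑ b, if ρ x b ≤ t then (∑ a, p a b) else 0))
    (hpmin0 : 0 ≤ pmin) (hpmin1 : pmin < 1) (hpmax0 : 0 < pmax) (hpmax1 : pmax ≤ 1)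
    (hsum : pmin + pmax < 1) :
    (1 - Pt) * Real.log (1 / pmax) - Pt * Real.log (1 - pmin)
        - (-(Pt * Real.log Pt) - (1 - Pt) * Real.log (1 - Pt))
      ≤ ∑ a, ∑ b, p a b * Real.log (p a b / ((∑ b', p a b') * (∑ a', p a' b))) := by
  set pX : 𝒳 → ℝ := fun a => ∑ b, p a b with hpX
  set pY : 𝒳 → ℝ := fun b => ∑ a, p a b with hpY
  have hpX0 : ∀ a, 0 ≤ pX a := fun a => Finset.sum_nonneg fun b _ => hp0 a b
  have hpY0 : ∀ b, 0 ≤ pY b := fun b => Finset.sum_nonneg fun a _ => hp0 a b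
  have hpX1 : ∑ a, pX a = 1 := hp1
  have hpY1 : ∑ b, pY b = 1 := by rw [← hp1]; exact Finset.sum_comm
  have hq0 : ∀ a b, pX a * pY b = 0 → p a b = 0 := by
    intro a b h
    rcases mul_eq_zero.mp h with h | h
    · exact (Finset.sum_eq_zero_iff_of_nonneg (fun b _ => hp0 a b)).mp h b (Finset.mem_univ b)
    · exact (Finset.sum_eq_zero_iff_of_nonneg (fun a _ => hp0 a b)).mp h a (Finset.mem_univ a)
  -- pass to product type
  set S : Finset (𝒳 × 𝒳) := Finset.univ.filter (fun ab : 𝒳 × 𝒳 => t < ρ ab.1 ab.2) with hS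
  set Sc : Finset (𝒳 × 𝒳) := Finset.univ.filter (fun ab : 𝒳 × 𝒳 => ¬ t < ρ ab.1 ab.2) with hSc
  have hPtS : ∑ ab ∈ S, p ab.1 ab.2 = Pt := by
    rw [hS, Finset.sum_filter, hPt, Fintype.sum_prod_type]
  set P2 : ℝ := ∑ ab ∈ Sc, p ab.1 ab.2 with hP2
  have hP12 : Pt + P2 = 1 := by
    rw [← hPtS, hP2, hS, hSc, Finset.sum_filter_add_sum_filter_not, Fintype.sum_prod_type]
    exact hpX1
  have hPt0 : 0 ≤ Pt := by
    rw [← hPtS]; exact Finset.sum_nonneg fun ab _ => hp0 _ _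
  have hP20 : 0 ≤ P2 := Finset.sum_nonneg fun ab _ => hp0 _ _
  have hPt1 : Pt ≤ 1 := by linarith
  have hP2eq : P2 = 1 - Pt := by linarith
  -- Q2 and its bounds
  set B : 𝒳 → ℝ := fun x => ∑ b, if ρ x b ≤ t then pY b else 0 with hB
  set Q2 : ℝ := ∑ ab ∈ Sc, pX ab.1 * pY ab.2 with hQ2
  set Q1 : ℝ := ∑ ab ∈ S, pX ab.1 * pY ab.2 with hQ1
  have hQ12 : Q1 + Q2 = 1 := by
    rw [hQ1, hQ2, hS, hSc, Finset.sum_filter_add_sum_filter_not, Fintype.sum_prod_type]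
    calc ∑ a, ∑ b, pX a * pY b = ∑ a, pX a * ∑ b, pY b := by
          simp [Finset.mul_sum]
      _ = 1 := by rw [hpY1]; simpa using hpX1
  have hQ2B : Q2 = ∑ a, pX a * B a := by
    rw [hQ2, hSc, Finset.sum_filter, Fintype.sum_prod_type]
    refine Finset.sum_congr rfl fun a _ => ?_
    rw [hB, Finset.mul_sum]
    refine Finset.sum_congr rfl fun b _ => ?_
    simp only [not_lt]
    by_cases h : ρ a b ≤ t <;> simp [h]
  have hBmin : ∀ a, pmin ≤ B a := by
    intro a
    rw [hpmin]
    exact Finset.inf'_le _ (Finset.mem_univ a)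
  have hBmax : ∀ a, B a ≤ pmax := by
    intro a
    rw [hpmax]
    exact Finset.le_sup' _ (Finset.mem_univ a)
  have hQ2a : pmin ≤ Q2 := by
    rw [hQ2B]
    calc pmin = ∑ a, pX a * pmin := by rw [← Finset.sum_mul, hpX1, one_mul]
      _ ≤ ∑ a, pX a * B a :=
        Finset.sum_le_sum fun a _ => mul_le_mul_of_nonneg_left (hBmin a) (hpX0 a)
  have hQ2b : Q2 ≤ pmax := by
    rw [hQ2B]
    calc ∑ a, pX a * B a ≤ ∑ a, pX a * pmax :=
        Finset.sum_le_sum fun a _ => mul_le_mul_of_nonneg_left (hBmax a) (hpX0 a)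
      _ = pmax := by rw [← Finset.sum_mul, hpX1, one_mul]
  have hQ1eq : Q1 = 1 - Q2 := by linarith
  have h10 : 1 - Q2 = 0 → Pt = 0 := by
    intro h
    have hQ10 : Q1 = 0 := by linarith
    rw [← hPtS]
    refine Finset.sum_eq_zero fun ab hab => ?_
    exact hq0 _ _ ((Finset.sum_eq_zero_iff_of_nonneg
      (fun ab _ => mul_nonneg (hpX0 ab.1) (hpY0 ab.2))).mp hQ10 ab hab)
  have h20 : Q2 = 0 → 1 - Pt = 0 := by
    intro h
    rw [← hP2eq, hP2]
    refine Finset.sum_eq_zero fun ab hab => ?_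
    exact hq0 _ _ ((Finset.sum_eq_zero_iff_of_nonneg
      (fun ab _ => mul_nonneg (hpX0 ab.1) (hpY0 ab.2))).mp h ab hab)
  -- assemble
  have main := final_ineq' Pt Q2 pmin pmax hPt0 hPt1 hQ2a hQ2b hpmin0 hpmin1 hpmax0 hpmax1 h10 h20
  have ls1 := log_sum_ineq' S (fun ab => p ab.1 ab.2) (fun ab => pX ab.1 * pY ab.2)
    (fun ab _ => hp0 _ _) (fun ab _ => mul_nonneg (hpX0 _) (hpY0 _)) (fun ab _ h => hq0 _ _ h)
  have ls2 := log_sum_ineq' Sc (fun ab => p ab.1 ab.2) (fun ab => pX ab.1 * pY ab.2)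
    (fun ab _ => hp0 _ _) (fun ab _ => mul_nonneg (hpX0 _) (hpY0 _)) (fun ab _ h => hq0 _ _ h)
  rw [hPtS, ← hQ1] at ls1
  rw [← hP2, ← hQ2, hP2eq] at ls2
  rw [hQ1eq] at ls1
  have hrhs : ∑ a, ∑ b, p a b * Real.log (p a b / ((∑ b', p a b') * (∑ a', p a' b)))
      = (∑ ab ∈ S, p ab.1 ab.2 * Real.log (p ab.1 ab.2 / (pX ab.1 * pY ab.2)))
        + ∑ ab ∈ Sc, p ab.1 ab.2 * Real.log (p ab.1 ab.2 / (pX ab.1 * pY ab.2)) := by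
    rw [hS, hSc, Finset.sum_filter_add_sum_filter_not, Fintype.sum_prod_type]
  rw [hrhs]
  calc _ ≤ Pt * Real.log (Pt / (1 - Q2)) + (1 - Pt) * Real.log ((1 - Pt) / Q2) := main
    _ ≤ _ := add_le_add ls1 ls2
end
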